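/- arXiv:1912.00671 — 10 statements merged into one kernel-verified Lean document; each statement's English description precedes it below -/
import Mathlib

section
/- Let H, H1, H2 be Hilbert spaces and A : H1 → H, B : H2 → H bounded linear operators with ran A ⊆ ran B. Then Q := B† A : H1 → H2 (where B† is the Moore–Penrose pseudo-inverse of B) is a well-defined bounded linear operator, and it is the unique operator satisfying A = B Q, ker Q = ker A, and ran Q ⊆ closure(ran B*). -/
open Filter Topology

section Aux

variable {H H2 : Type*}
    [NormedAddCommGroup H] [InnerProductSpace ℝ H] [CompleteSpace H]
    [NormedAddCommGroup H2] [InnerProductSpace ℝ H2] [CompleteSpace H2]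

/-- The kernel of `B` is the orthogonal complement of the range of its adjoint. -/
lemma ker_eq_ortho_range_adjoint (B : H2 →L[ℝ] H) :
    LinearMap.ker (B : H2 →ₗ[ℝ] H) =
      (LinearMap.range (ContinuousLinearMap.adjoint B : H →ₗ[ℝ] H2))ᗮ := by
  ext x
  simp only [LinearMap.mem_ker, Submodule.mem_orthogonal]
  constructor
  · rintro hx _ ⟨y, rfl⟩
    rw [ContinuousLinearMap.coe_coe, ContinuousLinearMap.adjoint_inner_left]
    simp [show B x = 0 from hx]
  · intro h
    have h2 : (inner ℝ (B x) (B x) : ℝ) = 0 := by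
      have := h _ ⟨B x, rfl⟩
      rwa [ContinuousLinearMap.coe_coe, ContinuousLinearMap.adjoint_inner_left, real_inner_comm] at this
    exact inner_self_eq_zero.mp h2

lemma closure_range_adjoint (B : H2 →L[ℝ] H) :
    closure (Set.range (ContinuousLinearMap.adjoint B)) =
      ((LinearMap.ker (B : H2 →ₗ[ℝ] H))ᗮ : Set H2) := by
  have h1 : (LinearMap.range (ContinuousLinearMap.adjoint
      B : H →ₗ[ℝ] H2)).topologicalClosure = (LinearMap.ker (B : H2 →ₗ[ℝ] H))ᗮ := by
    rw [ker_eq_ortho_range_adjoint, Submodule.orthogonal_orthogonal_eq_closure]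
  rw [← h1]
  rfl

end Aux

/-- **Douglas' theorem.**  Let `H, H1, H2` be Hilbert spaces and
`A : H1 → H`, `B : H2 → H` bounded linear operators with `ran A ⊆ ran B`.  Then
`Q := B† A` is a well-defined bounded linear operator, and it is the unique bounded
operator satisfying `A = B Q`, `ker Q = ker A` and `ran Q ⊆ closure (ran B*)`. -/
theorem statement1 {H H1 H2 : Type*}
    [NormedAddCommGroup H] [InnerProductSpace ℝ H] [CompleteSpace H]
    [NormedAddCommGroup H1] [InnerProductSpace ℝ H1] [CompleteSpace H1]
    [NormedAddCommGroup H2] [InnerProductSpace ℝ H2] [CompleteSpace H2]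
    (A : H1 →L[ℝ] H) (B : H2 →L[ℝ] H)
    (hran : Set.range A ⊆ Set.range B) :
    ∃! Q : H1 →L[ℝ] H2,
      A = B.comp Q ∧ LinearMap.ker (Q : H1 →ₗ[ℝ] H2) = LinearMap.ker (A : H1 →ₗ[ℝ] H) ∧
        Set.range Q ⊆ closure (Set.range (ContinuousLinearMap.adjoint B)) := by
  classical
  set K : Submodule ℝ H2 := LinearMap.ker (B : H2 →ₗ[ℝ] H) with hK
  have hKclosed : IsClosed (K : Set H2) := ContinuousLinearMap.isClosed_ker B
  haveI : CompleteSpace K := hKclosed.completeSpace_coe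
  -- choice of preimages
  have hch : ∀ x : H1, ∃ y : H2, B y = A x := fun x => hran ⟨x, rfl⟩
  -- the projection onto Kᗮ of any preimage is well defined
  have proj_mem : ∀ y : H2, (Kᗮ.orthogonalProjectionOnto y : H2) ∈ Kᗮ := fun y =>
    (Kᗮ.orthogonalProjectionOnto y).2
  have B_proj : ∀ y : H2, B (Kᗮ.orthogonalProjectionOnto y : H2) = B y := by
    intro y
    have hdecomp : (K.orthogonalProjectionOnto y : H2) + (Kᗮ.orthogonalProjectionOnto y : H2) = y :=
      K.starProjection_add_starProjection_orthogonal y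
    have hk : B (K.orthogonalProjectionOnto y : H2) = 0 :=
      (K.orthogonalProjectionOnto y).2
    conv_rhs => rw [← hdecomp]
    rw [map_add, hk, zero_add]
  -- define the function
  let g : H1 → H2 := fun x => (Kᗮ.orthogonalProjectionOnto (hch x).choose : H2)
  have hg_spec : ∀ x, B (g x) = A x := by
    intro x
    rw [B_proj, (hch x).choose_spec]
  have hg_mem : ∀ x, g x ∈ Kᗮ := fun x => proj_mem _
  -- well-definedness: uniqueness of element of Kᗮ with given image
  have huniq : ∀ z z' : H2, z ∈ Kᗮ → z' ∈ Kᗮ → B z = B z' → z = z' := by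
    intro z z' hz hz' hB
    have : z - z' ∈ K ⊓ Kᗮ := ⟨by simp [hK, LinearMap.mem_ker, map_sub, hB],
      Submodule.sub_mem _ hz hz'⟩
    rw [Submodule.inf_orthogonal_eq_bot, Submodule.mem_bot] at this
    exact sub_eq_zero.mp this
  have hwd : ∀ x (z : H2), z ∈ Kᗮ → B z = A x → g x = z := by
    intro x z hz hB
    exact huniq _ _ (hg_mem x) hz (by rw [hg_spec, hB])
  -- linearity
  let gl : H1 →ₗ[ℝ] H2 :=
    { toFun := g
      map_add' := by
        intro x y
        refine hwd (x + y) (g x + g y) (Submodule.add_mem _ (hg_mem x) (hg_mem y)) ?_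
        rw [map_add, hg_spec, hg_spec, map_add]
      map_smul' := by
        intro c x
        refine hwd (c • x) (c • g x) (Submodule.smul_mem _ _ (hg_mem x)) ?_
        simp only [map_smul, hg_spec, RingHom.id_apply] }
  -- continuity via closed graph theorem
  have hcont : Continuous gl := by
    apply gl.continuous_of_seq_closed_graph
    intro u x y hu hgu
    have h1 : Tendsto (fun n => B (gl (u n))) atTop (𝓝 (B y)) :=
      (B.continuous.tendsto y).comp hgu
    have h2 : Tendsto (fun n => A (u n)) atTop (𝓝 (A x)) :=
      (A.continuous.tendsto x).comp hu
    have heq : (fun n => B (gl (u n))) = fun n => A (u n) := by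
      funext n; exact hg_spec (u n)
    rw [heq] at h1
    have hBy : B y = A x := tendsto_nhds_unique h1 h2
    have hyK : y ∈ Kᗮ := by
      have : ∀ n, gl (u n) ∈ Kᗮ := fun n => hg_mem (u n)
      exact K.isClosed_orthogonal.mem_of_tendsto hgu
        (Filter.Eventually.of_forall fun n => hg_mem (u n))
    exact (hwd x y hyK hBy).symm
  let Q : H1 →L[ℝ] H2 := ⟨gl, hcont⟩
  have hQ_apply : ∀ x, Q x = g x := fun _ => rfl
  have hclos := closure_range_adjoint (H := H) (H2 := H2) B
  refine ⟨Q, ⟨?_, ?_, ?_⟩, ?_⟩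
  · ext x
    exact (hg_spec x).symm
  · ext x
    simp only [LinearMap.mem_ker, ContinuousLinearMap.coe_coe]
    constructor
    · intro hx
      rw [← hg_spec x, hQ_apply x] at *
      rw [hx, map_zero]
    · intro hx
      have := hwd x 0 (Submodule.zero_mem _) (by rw [map_zero, hx])
      exact this
  · rintro _ ⟨x, rfl⟩
    rw [hclos]
    exact hg_mem x
  · rintro Q' ⟨hfact, hker, hrange⟩
    ext x
    have h1 : Q' x ∈ Kᗮ := by
      have := hrange ⟨x, rfl⟩
      rwa [hclos] at this
    have h2 : B (Q' x) = A x := by rw [hfact]; rfl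
    exact (hwd x (Q' x) h1 h2).symm
end

section
/- Let F = G ⊕ H be a direct sum of Hilbert spaces and C a positive bounded operator on F with block structure C = [[C_U, C_{UV}],[C_{VU}, C_V]]. If Q̂ : G → H is a bounded linear operator with C_V Q̂ = C_{VU}, then the block operator Q = [[0,0],[Q̂, Id_H]] satisfies Q² = Q, ran Q = H, and C Q = Q* C; in particular Q is a C-symmetric oblique projection onto H. -/
noncomputable section
open scoped RealInnerProductSpace

variable (G H : Type*)
  [NormedAddCommGroup G] [InnerProductSpace ℝ G] [CompleteSpace G]
  [NormedAddCommGroup H] [InnerProductSpace ℝ H] [CompleteSpace H]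

/-- The Hilbert direct sum `F = G ⊕ H`. -/
abbrev DirSum := WithLp 2 (G × H)

/-- Embedding of `G` into `G ⊕ H`. -/
def inG : G →L[ℝ] DirSum G H :=
  ((WithLp.prodContinuousLinearEquiv 2 ℝ G H).symm :
      G × H →L[ℝ] DirSum G H).comp (ContinuousLinearMap.inl ℝ G H)

/-- Embedding of `H` into `G ⊕ H`. -/
def inH : H →L[ℝ] DirSum G H :=
  ((WithLp.prodContinuousLinearEquiv 2 ℝ G H).symm :
      G × H →L[ℝ] DirSum G H).comp (ContinuousLinearMap.inr ℝ G H)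

/-- Projection of `G ⊕ H` onto `G`. -/
def prG : DirSum G H →L[ℝ] G :=
  (ContinuousLinearMap.fst ℝ G H).comp
    ((WithLp.prodContinuousLinearEquiv 2 ℝ G H : DirSum G H →L[ℝ] G × H))

/-- Projection of `G ⊕ H` onto `H`. -/
def prH : DirSum G H →L[ℝ] H :=
  (ContinuousLinearMap.snd ℝ G H).comp
    ((WithLp.prodContinuousLinearEquiv 2 ℝ G H : DirSum G H →L[ℝ] G × H))

lemma prG_inH (h : H) : prG G H (inH G H h) = 0 := rfl
lemma prH_inH (h : H) : prH G H (inH G H h) = h := rfl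

lemma decomp (x : DirSum G H) : inG G H (prG G H x) + inH G H (prH G H x) = x := by
  apply (WithLp.prodContinuousLinearEquiv 2 ℝ G H).injective
  ext <;> simp [inG, inH, prG, prH]

lemma inH_adj (z : H) (w : DirSum G H) : ⟪inH G H z, w⟫ = ⟪z, prH G H w⟫ := by
  show (⟪(0:G), w.ofLp.1⟫ + ⟪z, w.ofLp.2⟫ : ℝ) = _
  simp [prH]

/-- Let `F = G ⊕ H` and let `C` be a positive bounded operator on `F` with
block structure `[[C_U, C_UV],[C_VU, C_V]]`.  If `Q̂ : G → H` is bounded with `C_V Q̂ = C_VU`,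
then the block operator `Q = [[0,0],[Q̂, Id_H]]` satisfies `Q² = Q`, `ran Q = H` and
`C Q = Q* C`; i.e. `Q` is a `C`-symmetric oblique projection onto `H`. -/
theorem statement2
    (C : DirSum G H →L[ℝ] DirSum G H)
    (hsa : IsSelfAdjoint C) (hpos : ∀ x : DirSum G H, 0 ≤ ⟪x, C x⟫)
    (Qhat : G →L[ℝ] H)
    (hQhat : ((prH G H).comp (C.comp (inH G H))).comp Qhat = (prH G H).comp (C.comp (inG G H))) :
    (((inH G H).comp ((Qhat.comp (prG G H)) + prH G H)).comp
        ((inH G H).comp ((Qhat.comp (prG G H)) + prH G H))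
      = (inH G H).comp ((Qhat.comp (prG G H)) + prH G H)) ∧
    Set.range ((inH G H).comp ((Qhat.comp (prG G H)) + prH G H)) = Set.range (inH G H) ∧
    C.comp ((inH G H).comp ((Qhat.comp (prG G H)) + prH G H))
      = (ContinuousLinearMap.adjoint ((inH G H).comp ((Qhat.comp (prG G H)) + prH G H))).comp C := by
  set Q := (inH G H).comp ((Qhat.comp (prG G H)) + prH G H) with hQ
  -- the "H-component" map
  set a : DirSum G H →L[ℝ] H := (Qhat.comp (prG G H)) + prH G H with ha
  have hQapp : ∀ x, Q x = inH G H (a x) := fun x => rfl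
  have haapp : ∀ x, a x = Qhat (prG G H x) + prH G H x := fun x => rfl
  have ha_inH : ∀ h : H, a (inH G H h) = h := by
    intro h
    simp [haapp, prG_inH, prH_inH]
  have hCsym : ∀ x y : DirSum G H, ⟪C x, y⟫ = ⟪x, C y⟫ :=
    fun x y => ((ContinuousLinearMap.isSelfAdjoint_iff_isSymmetric.mp hsa) x y)
  -- key identity: prH (C y) = C_V (a y)
  have hkey : ∀ y : DirSum G H, prH G H (C y) = prH G H (C (inH G H (a y))) := by
    intro y
    have h1 := congrArg (fun T : G →L[ℝ] H => T (prG G H y)) hQhat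
    simp only [ContinuousLinearMap.comp_apply] at h1
    calc prH G H (C y)
        = prH G H (C (inG G H (prG G H y) + inH G H (prH G H y))) := by rw [decomp]
      _ = prH G H (C (inG G H (prG G H y))) + prH G H (C (inH G H (prH G H y))) := by
          rw [map_add, map_add]
      _ = prH G H (C (inH G H (Qhat (prG G H y)))) + prH G H (C (inH G H (prH G H y))) := by
          rw [h1]
      _ = prH G H (C (inH G H (a y))) := by
          rw [haapp, map_add, map_add, map_add]
  have hsym : ∀ x y : DirSum G H, ⟪Q x, C y⟫ = ⟪x, C (Q y)⟫ := by
    intro x y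
    have e1 : ⟪Q x, C y⟫ = ⟪a x, prH G H (C (inH G H (a y)))⟫ := by
      rw [hQapp, inH_adj, hkey]
    have e2 : ⟪x, C (Q y)⟫ = ⟪a y, prH G H (C (inH G H (a x)))⟫ := by
      rw [hQapp, ← hCsym, real_inner_comm, inH_adj, hkey x]
    rw [e1, e2, ← inH_adj, ← inH_adj, ← hCsym]
    exact real_inner_comm _ _
  have hCQ : IsSelfAdjoint (C.comp Q) := by
    rw [ContinuousLinearMap.isSelfAdjoint_iff_isSymmetric]
    intro u v
    show (⟪C (Q u), v⟫ : ℝ) = ⟪u, C (Q v)⟫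
    rw [hCsym (Q u) v, hsym]
  refine ⟨?_, ?_, ?_⟩
  · ext x
    show Q (Q x) = Q x
    rw [hQapp x, hQapp, ha_inH]
  · ext z
    constructor
    · rintro ⟨x, rfl⟩
      exact ⟨a x, (hQapp x).symm⟩
    · rintro ⟨h, rfl⟩
      exact ⟨inH G H h, by rw [hQapp, ha_inH]⟩
  · calc C.comp Q = ContinuousLinearMap.adjoint (C.comp Q) := hCQ.adjoint_eq.symm
      _ = (ContinuousLinearMap.adjoint Q).comp (ContinuousLinearMap.adjoint C) :=
          ContinuousLinearMap.adjoint_comp _ _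
      _ = (ContinuousLinearMap.adjoint Q).comp C := by rw [hsa.adjoint_eq]
end
end

section
/- There exists a positive trace-class operator C = [[C_U, C_{UV}],[C_{VU}, C_V]] on the direct sum of two infinite-dimensional separable Hilbert spaces such that ran C_{VU} is not contained in ran C_V. Concretely, with orthonormal basis (e_j), take C_U = Σ j^{-2} e_j⊗e_j, C_V = Σ j^{-4} e_j⊗e_j, and C_{VU} = C_{UV} = Σ j^{-3} e_j⊗e_j; then ran C_{VU} ⊄ ran C_V. -/
open scoped RealInnerProductSpace

open scoped ENNReal

noncomputable section Statement5Aux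

variable {H : Type*} [NormedAddCommGroup H] [InnerProductSpace ℝ H] [CompleteSpace H]

lemma memℓp_mul (c : ℕ → ℝ) (hc : ∀ j, |c j| ≤ 1) (f : lp (fun _ : ℕ => ℝ) 2) :
    Memℓp (fun j => c j * f j) 2 := by
  apply memℓp_gen
  have hf := (lp.memℓp f).summable (p := 2) (by norm_num)
  refine hf.of_nonneg_of_le (fun j => by positivity) fun j => ?_
  have h1 : ‖c j * f j‖ ≤ ‖f j‖ := by
    rw [norm_mul]
    calc ‖c j‖ * ‖f j‖ ≤ 1 * ‖f j‖ :=
          mul_le_mul_of_nonneg_right (by simpa using hc j) (norm_nonneg _)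
      _ = ‖f j‖ := one_mul _
  exact Real.rpow_le_rpow (norm_nonneg _) h1 (by norm_num)

def mulSeq (c : ℕ → ℝ) (hc : ∀ j, |c j| ≤ 1) (f : lp (fun _ : ℕ => ℝ) 2) :
    lp (fun _ : ℕ => ℝ) 2 :=
  ⟨fun j => c j * f j, memℓp_mul c hc f⟩

@[simp] lemma mulSeq_apply (c : ℕ → ℝ) (hc : ∀ j, |c j| ≤ 1) (f : lp (fun _ : ℕ => ℝ) 2)
    (j : ℕ) : mulSeq c hc f j = c j * f j := rfl

lemma mulSeq_add (c : ℕ → ℝ) (hc : ∀ j, |c j| ≤ 1) (f g : lp (fun _ : ℕ => ℝ) 2) :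
    mulSeq c hc (f + g) = mulSeq c hc f + mulSeq c hc g := by
  apply lp.ext
  funext j
  simp only [lp.coeFn_add, Pi.add_apply, mulSeq_apply]
  · ring
lemma mulSeq_smul (c : ℕ → ℝ) (hc : ∀ j, |c j| ≤ 1) (r : ℝ) (f : lp (fun _ : ℕ => ℝ) 2) :
    mulSeq c hc (r • f) = r • mulSeq c hc f := by
  apply lp.ext
  funext j
  simp only [lp.coeFn_smul, Pi.smul_apply, mulSeq_apply, smul_eq_mul]
  ring

lemma norm_mulSeq_le (c : ℕ → ℝ) (hc : ∀ j, |c j| ≤ 1) (f : lp (fun _ : ℕ => ℝ) 2) :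
    ‖mulSeq c hc f‖ ≤ ‖f‖ := by
  have hp : 0 < (2 : ℝ≥0∞).toReal := by norm_num
  refine lp.norm_le_of_tsum_le hp (norm_nonneg _) ?_
  rw [lp.norm_rpow_eq_tsum hp f]
  refine Summable.tsum_le_tsum (fun j => ?_) ((memℓp_mul c hc f).summable hp) ((lp.memℓp f).summable hp)
  refine Real.rpow_le_rpow (norm_nonneg _) ?_ (by norm_num)
  rw [mulSeq_apply, norm_mul]
  calc ‖c j‖ * ‖f j‖ ≤ 1 * ‖f j‖ :=
        mul_le_mul_of_nonneg_right (by simpa using hc j) (norm_nonneg _)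
    _ = ‖f j‖ := one_mul _

def diagOp (e : HilbertBasis ℕ ℝ H) (c : ℕ → ℝ) (hc : ∀ j, |c j| ≤ 1) : H →L[ℝ] H :=
  LinearMap.mkContinuous
    { toFun := fun x => e.repr.symm (mulSeq c hc (e.repr x))
      map_add' := fun x y => by
        simp only [map_add, mulSeq_add]
      map_smul' := fun r x => by
        simp only [map_smul, mulSeq_smul, RingHom.id_apply] }
    1 (fun x => by
      simp only [LinearMap.coe_mk, AddHom.coe_mk, one_mul]
      rw [LinearIsometryEquiv.norm_map]
      calc ‖mulSeq c hc (e.repr x)‖ ≤ ‖e.repr x‖ := norm_mulSeq_le c hc _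
        _ = ‖x‖ := e.repr.norm_map x)

lemma diagOp_apply (e : HilbertBasis ℕ ℝ H) (c : ℕ → ℝ) (hc : ∀ j, |c j| ≤ 1) (x : H) :
    diagOp e c hc x = e.repr.symm (mulSeq c hc (e.repr x)) := rfl

lemma diagOp_basis (e : HilbertBasis ℕ ℝ H) (c : ℕ → ℝ) (hc : ∀ j, |c j| ≤ 1) (j : ℕ) :
    diagOp e c hc (e j) = c j • e j := by
  rw [diagOp_apply]
  have h1 : mulSeq c hc (e.repr (e j)) = c j • e.repr (e j) := by
    apply lp.ext
    funext i
    rw [e.repr_self]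
    simp only [mulSeq_apply, lp.coeFn_smul, Pi.smul_apply, smul_eq_mul]
    rcases eq_or_ne i j with rfl | hij
    · simp [lp.single_apply_self]
    · simp [lp.single_apply_ne _ _ _ hij, Pi.single_apply, hij]
  rw [h1, LinearIsometryEquiv.map_smul, LinearIsometryEquiv.symm_apply_apply]

lemma diagOp_symm (e : HilbertBasis ℕ ℝ H) (c : ℕ → ℝ) (hc : ∀ j, |c j| ≤ 1) :
    IsSelfAdjoint (diagOp e c hc) := by
  rw [ContinuousLinearMap.isSelfAdjoint_iff_isSymmetric]
  intro x y
  have hx := (e.repr.inner_map_map (diagOp e c hc x) y).symm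
  have hy := (e.repr.inner_map_map x (diagOp e c hc y)).symm
  show ⟪diagOp e c hc x, y⟫ = ⟪x, diagOp e c hc y⟫
  rw [hx, hy, diagOp_apply, diagOp_apply, LinearIsometryEquiv.apply_symm_apply,
    LinearIsometryEquiv.apply_symm_apply, lp.inner_eq_tsum, lp.inner_eq_tsum]
  apply tsum_congr
  intro j
  simp only [mulSeq_apply, RCLike.inner_apply, starRingEnd_apply, star_trivial]
  ring

lemma diagOp_inner_self (e : HilbertBasis ℕ ℝ H) (c : ℕ → ℝ) (hc : ∀ j, |c j| ≤ 1)
    (hc0 : ∀ j, 0 ≤ c j) (x : H) : 0 ≤ ⟪x, diagOp e c hc x⟫ := by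
  have hx := (e.repr.inner_map_map x (diagOp e c hc x)).symm
  rw [show (⟪x, diagOp e c hc x⟫ : ℝ) = inner ℝ x (diagOp e c hc x) from rfl, hx,
    diagOp_apply, LinearIsometryEquiv.apply_symm_apply, lp.inner_eq_tsum]
  refine tsum_nonneg fun j => ?_
  simp only [mulSeq_apply, RCLike.inner_apply, starRingEnd_apply, star_trivial]
  have := hc0 j
  nlinarith [sq_nonneg (e.repr x j)]

end Statement5Aux

/-- On an infinite-dimensional separable Hilbert space with orthonormal
basis `(e j)` there exist positive trace-class diagonal operators
`C_U = Σ (j+1)⁻² e_j ⊗ e_j`, `C_V = Σ (j+1)⁻⁴ e_j ⊗ e_j` and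
`C_VU = C_UV = Σ (j+1)⁻³ e_j ⊗ e_j` (forming a positive block operator
`C = [[C_U, C_UV],[C_VU, C_V]]`) such that `ran C_VU ⊄ ran C_V`. -/
theorem statement5 {H : Type*} [NormedAddCommGroup H] [InnerProductSpace ℝ H]
    [CompleteSpace H] (e : HilbertBasis ℕ ℝ H) :
    ∃ CU CV CVU : H →L[ℝ] H,
      IsSelfAdjoint CU ∧ IsSelfAdjoint CV ∧ IsSelfAdjoint CVU ∧
      (∀ x : H, 0 ≤ ⟪x, CU x⟫) ∧ (∀ x : H, 0 ≤ ⟪x, CV x⟫) ∧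
      -- trace-class: the diagonal traces are summable
      Summable (fun j : ℕ => ⟪e j, CU (e j)⟫) ∧
      Summable (fun j : ℕ => ⟪e j, CV (e j)⟫) ∧
      -- the concrete diagonal form of the three operators
      (∀ j : ℕ, CU (e j) = (((j : ℝ) + 1) ^ (-(2 : ℤ))) • e j) ∧
      (∀ j : ℕ, CV (e j) = (((j : ℝ) + 1) ^ (-(4 : ℤ))) • e j) ∧
      (∀ j : ℕ, CVU (e j) = (((j : ℝ) + 1) ^ (-(3 : ℤ))) • e j) ∧
      ¬ Set.range CVU ⊆ Set.range CV := by
  have hpos : ∀ j : ℕ, (0 : ℝ) < (j : ℝ) + 1 := fun j => by positivity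
  set c2 : ℕ → ℝ := fun j => ((j : ℝ) + 1) ^ (-(2 : ℤ)) with hc2def
  set c3 : ℕ → ℝ := fun j => ((j : ℝ) + 1) ^ (-(3 : ℤ)) with hc3def
  set c4 : ℕ → ℝ := fun j => ((j : ℝ) + 1) ^ (-(4 : ℤ)) with hc4def
  have key : ∀ (k : ℤ), 0 ≤ k → ∀ j : ℕ, |((j : ℝ) + 1) ^ (-k)| ≤ 1 := by
    intro k hk j
    have h0 : (0 : ℝ) ≤ ((j : ℝ) + 1) ^ (-k) := by positivity
    rw [abs_of_nonneg h0, zpow_neg, inv_le_one_iff₀]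
    right
    exact one_le_zpow₀ (by linarith [hpos j]) hk
  have hb2 : ∀ j, |c2 j| ≤ 1 := key 2 (by norm_num)
  have hb3 : ∀ j, |c3 j| ≤ 1 := key 3 (by norm_num)
  have hb4 : ∀ j, |c4 j| ≤ 1 := key 4 (by norm_num)
  have h02 : ∀ j, 0 ≤ c2 j := fun j => by simp only [hc2def]; positivity
  have h04 : ∀ j, 0 ≤ c4 j := fun j => by simp only [hc4def]; positivity
  refine ⟨diagOp e c2 hb2, diagOp e c4 hb4, diagOp e c3 hb3,
    diagOp_symm e c2 hb2, diagOp_symm e c4 hb4, diagOp_symm e c3 hb3,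
    diagOp_inner_self e c2 hb2 h02, diagOp_inner_self e c4 hb4 h04, ?_, ?_,
    diagOp_basis e c2 hb2, diagOp_basis e c4 hb4, diagOp_basis e c3 hb3, ?_⟩
  · -- trace of CU summable
    have hd : ∀ j : ℕ, ⟪e j, diagOp e c2 hb2 (e j)⟫ = c2 j := by
      intro j
      rw [diagOp_basis, real_inner_smul_right, real_inner_self_eq_norm_sq,
        e.orthonormal.1 j]
      ring
    simp only [hd]
    have hs : Summable fun n : ℕ => 1 / (n : ℝ) ^ (2 : ℕ) :=
      Real.summable_one_div_nat_pow.2 (by norm_num)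
    refine ((summable_nat_add_iff 1).2 hs).congr fun j => ?_
    simp only [hc2def, zpow_neg, zpow_natCast, zpow_ofNat, one_div]
    push_cast
    ring_nf
  · -- trace of CV summable
    have hd : ∀ j : ℕ, ⟪e j, diagOp e c4 hb4 (e j)⟫ = c4 j := by
      intro j
      rw [diagOp_basis, real_inner_smul_right, real_inner_self_eq_norm_sq,
        e.orthonormal.1 j]
      ring
    simp only [hd]
    have hs : Summable fun n : ℕ => 1 / (n : ℝ) ^ (4 : ℕ) :=
      Real.summable_one_div_nat_pow.2 (by norm_num)
    refine ((summable_nat_add_iff 1).2 hs).congr fun j => ?_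
    simp only [hc4def, zpow_neg, zpow_natCast, zpow_ofNat, one_div]
    push_cast
    ring_nf
  · -- range not contained
    intro hsub
    have hymem : Memℓp (fun j : ℕ => ((j : ℝ) + 1)⁻¹) (2 : ℝ≥0∞) := by
      apply memℓp_gen
      have hs : Summable fun n : ℕ => 1 / (n : ℝ) ^ (2 : ℕ) :=
        Real.summable_one_div_nat_pow.2 (by norm_num)
      refine ((summable_nat_add_iff 1).2 hs).congr fun j => ?_
      rw [Real.norm_eq_abs, abs_of_nonneg (by positivity)]
      rw [show ((2 : ℝ≥0∞).toReal) = ((2 : ℕ) : ℝ) by norm_num, Real.rpow_natCast]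
      rw [inv_pow, one_div]
      push_cast
      ring_nf
    set y : H := e.repr.symm ⟨fun j : ℕ => ((j : ℝ) + 1)⁻¹, hymem⟩ with hy
    have hyrep : ∀ j : ℕ, ⟪e j, y⟫ = ((j : ℝ) + 1)⁻¹ := by
      intro j
      rw [← e.repr_apply_apply, hy, LinearIsometryEquiv.apply_symm_apply]
    obtain ⟨z, hz⟩ := hsub (Set.mem_range_self y)
    have hzcoef : ∀ j : ℕ, ⟪e j, z⟫ = 1 := by
      intro j
      have hsymV := ContinuousLinearMap.isSelfAdjoint_iff_isSymmetric.mp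
        (diagOp_symm e c4 hb4) (e j) z
      have hsymVU := ContinuousLinearMap.isSelfAdjoint_iff_isSymmetric.mp
        (diagOp_symm e c3 hb3) (e j) y
      simp only [ContinuousLinearMap.coe_coe] at hsymV hsymVU
      have h1 : ⟪e j, diagOp e c4 hb4 z⟫ = c4 j * ⟪e j, z⟫ := by
        rw [← hsymV, diagOp_basis, real_inner_smul_left]
      have h2 : ⟪e j, diagOp e c3 hb3 y⟫ = c3 j * ((j : ℝ) + 1)⁻¹ := by
        rw [← hsymVU, diagOp_basis, real_inner_smul_left, hyrep]
      have h3 : c4 j * ⟪e j, z⟫ = c3 j * ((j : ℝ) + 1)⁻¹ := by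
        rw [← h1, ← h2, hz]
      have hc43 : c3 j * ((j : ℝ) + 1)⁻¹ = c4 j := by
        simp only [hc3def, hc4def, zpow_neg, zpow_natCast, zpow_ofNat]
        rw [← mul_inv, inv_inj]
        ring
      have hc4pos : 0 < c4 j := by simp only [hc4def]; positivity
      rw [hc43] at h3
      exact mul_left_cancel₀ hc4pos.ne' (h3.trans (mul_one (c4 j)).symm)
    have hsum := e.summable_inner_mul_inner z z
    have hone : Summable fun _ : ℕ => (1 : ℝ) := by
      refine hsum.congr fun j => ?_
      rw [hzcoef j, mul_one, real_inner_comm, hzcoef j]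
    rw [summable_const_iff] at hone
    norm_num at hone
end

section
/- Let X be a random variable taking values in X with distribution P_X, k a measurable kernel on X with separable RKHS H, feature map φ(x) = k(x,·), and E[‖φ(X)‖²_H] < ∞. Then the kernel covariance operator C_X = Cov[φ(X)] satisfies ker C_X = { h ∈ H : h is P_X-a.e. constant on X }, and the uncentred operator ᵘC_X = E[φ(X)⊗φ(X)] satisfies ker ᵘC_X = { h ∈ H : h = 0 P_X-a.e. }. -/
open MeasureTheory
open scoped RealInnerProductSpace

lemma memLp2_integrable_mul {Ω : Type*} [MeasurableSpace Ω] {μ : Measure Ω} {f g : Ω → ℝ}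
    (hf : MemLp f 2 μ) (hg : MemLp g 2 μ) : Integrable (fun ω => f ω * g ω) μ := by
  have h1 := (hf.add hg).integrable_sq
  have h2 := hf.integrable_sq
  have h3 := hg.integrable_sq
  have heq : (fun ω => f ω * g ω) = fun ω => ((f ω + g ω) ^ 2 - f ω ^ 2 - g ω ^ 2) / 2 := by
    funext ω; ring
  rw [heq]
  exact ((h1.sub h2).sub h3).div_const 2

/-- Let `X` be a random variable with values in `𝒳`, `H` a separable RKHS on
`𝒳` with measurable feature map `φ` (so `h(x) = ⟪h, φ x⟫`) and `E[‖φ(X)‖²] < ∞`.  Then the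
centred kernel covariance operator `C_X` (characterised by `⟪h, C_X h'⟫ = Cov[h(X), h'(X)]`)
has kernel exactly the `P_X`-a.e. constant functions of `H`, and the uncentred operator
`ᵘC_X` (characterised by `⟪h, ᵘC_X h'⟫ = E[h(X) h'(X)]`) has kernel exactly the functions of
`H` vanishing `P_X`-a.e. -/
theorem statement7 {Ω 𝒳 H : Type*} [MeasurableSpace Ω] [MeasurableSpace 𝒳]
    [NormedAddCommGroup H] [InnerProductSpace ℝ H] [CompleteSpace H]
    [TopologicalSpace.SeparableSpace H]
    (ℙ : Measure Ω) [IsProbabilityMeasure ℙ]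
    (X : Ω → 𝒳) (hX : Measurable X)
    (φ : 𝒳 → H) (hφ : StronglyMeasurable φ)
    (hφ2 : MemLp (fun ω => φ (X ω)) 2 ℙ)
    (CX uCX : H →L[ℝ] H)
    (hCX : ∀ h h' : H, ⟪h, CX h'⟫ =
      (∫ ω, ⟪h, φ (X ω)⟫ * ⟪h', φ (X ω)⟫ ∂ℙ)
        - (∫ ω, ⟪h, φ (X ω)⟫ ∂ℙ) * (∫ ω, ⟪h', φ (X ω)⟫ ∂ℙ))
    (huCX : ∀ h h' : H, ⟪h, uCX h'⟫ = ∫ ω, ⟪h, φ (X ω)⟫ * ⟪h', φ (X ω)⟫ ∂ℙ) :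
    (∀ h : H, h ∈ LinearMap.ker (CX : H →ₗ[ℝ] H) ↔ ∃ c : ℝ, ∀ᵐ x ∂(ℙ.map X), ⟪h, φ x⟫ = c) ∧
    (∀ h : H, h ∈ LinearMap.ker (uCX : H →ₗ[ℝ] H) ↔ ∀ᵐ x ∂(ℙ.map X), ⟪h, φ x⟫ = 0) := by
  -- basic measurability / integrability facts
  have hmf : ∀ h : H, MemLp (fun ω => ⟪h, φ (X ω)⟫) 2 ℙ := fun h => hφ2.const_inner h
  have hint : ∀ h : H, Integrable (fun ω => ⟪h, φ (X ω)⟫) ℙ :=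
    fun h => (hmf h).integrable one_le_two
  have hintmul : ∀ h h' : H,
      Integrable (fun ω => ⟪h, φ (X ω)⟫ * ⟪h', φ (X ω)⟫) ℙ :=
    fun h h' => memLp2_integrable_mul (hmf h) (hmf h')
  have hmeas : ∀ h : H, Measurable fun x => ⟪h, φ x⟫ := fun h =>
    (((innerSL ℝ h).continuous).comp_stronglyMeasurable hφ).measurable
  -- translation between a.e. w.r.t. ℙ.map X and ℙ
  have hae : ∀ (h : H) (c : ℝ),
      (∀ᵐ x ∂(ℙ.map X), ⟪h, φ x⟫ = c) ↔ ∀ᵐ ω ∂ℙ, ⟪h, φ (X ω)⟫ = c := by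
    intro h c
    exact ae_map_iff hX.aemeasurable (measurableSet_eq_fun (hmeas h) measurable_const)
  constructor
  · -- centred operator
    intro h
    set f : Ω → ℝ := fun ω => ⟪h, φ (X ω)⟫ with hf
    set m : ℝ := ∫ ω, f ω ∂ℙ with hm
    constructor
    · intro hker
      have hker' : CX h = 0 := hker
      have hzero : ⟪h, CX h⟫ = 0 := by rw [hker', inner_zero_right]
      -- ∫ (f - m)^2 = ⟪h, CX h⟫ = 0
      have hexp : (fun ω => (f ω - m) ^ 2)
          = fun ω => (f ω * f ω - (2 * m) * f ω) + m * m := by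
        funext ω; ring
      have hint1 : Integrable (fun ω => f ω * f ω - (2 * m) * f ω) ℙ :=
        (hintmul h h).sub ((hint h).const_mul (2 * m))
      have hI : ∫ ω, (f ω - m) ^ 2 ∂ℙ = 0 := by
        rw [hexp, integral_add hint1 (integrable_const (m * m)),
          integral_sub (hintmul h h) ((hint h).const_mul (2 * m)),
          integral_const_mul, integral_const]
        simp only [probReal_univ, one_smul]
        have := hCX h h
        rw [hzero] at this
        rw [← hm]
        nlinarith [this]
      have hnn : 0 ≤ fun ω => (f ω - m) ^ 2 := fun ω => sq_nonneg _
      have hintsq : Integrable (fun ω => (f ω - m) ^ 2) ℙ :=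
        ((hmf h).sub (memLp_const m)).integrable_sq
      have haez := (integral_eq_zero_iff_of_nonneg hnn hintsq).1 hI
      refine ⟨m, (hae h m).2 ?_⟩
      filter_upwards [haez] with ω hω
      have : (f ω - m) ^ 2 = 0 := hω
      have := pow_eq_zero_iff (n := 2) (by norm_num) |>.1 this
      linarith [this]
    · rintro ⟨c, hc⟩
      have hc' : ∀ᵐ ω ∂ℙ, f ω = c := (hae h c).1 hc
      have key : ∀ h' : H, ⟪h', CX h⟫ = 0 := by
        intro h'
        rw [hCX h' h]
        set g : Ω → ℝ := fun ω => ⟪h', φ (X ω)⟫ with hg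
        have h1 : ∫ ω, g ω * f ω ∂ℙ = c * ∫ ω, g ω ∂ℙ := by
          rw [← integral_const_mul]
          apply integral_congr_ae
          filter_upwards [hc'] with ω hω
          rw [hω]; ring
        have h2 : ∫ ω, f ω ∂ℙ = c := by
          rw [integral_congr_ae (g := fun _ => c) hc', integral_const]
          simp
        rw [h1, h2]; ring
      have : CX h = 0 := by
        apply ext_inner_left ℝ
        intro h'
        rw [key h', inner_zero_right]
      exact this
  · -- uncentred operator
    intro h
    set f : Ω → ℝ := fun ω => ⟪h, φ (X ω)⟫ with hf
    constructor
    · intro hker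
      have hker' : uCX h = 0 := hker
      have hzero : ⟪h, uCX h⟫ = 0 := by rw [hker', inner_zero_right]
      have hI : ∫ ω, f ω ^ 2 ∂ℙ = 0 := by
        have := huCX h h
        rw [hzero] at this
        have heq : (fun ω => f ω ^ 2) = fun ω => f ω * f ω := by funext ω; ring
        rw [heq]
        exact this.symm
      have hnn : 0 ≤ fun ω => f ω ^ 2 := fun ω => sq_nonneg _
      have haez := (integral_eq_zero_iff_of_nonneg hnn (hmf h).integrable_sq).1 hI
      refine (hae h 0).2 ?_
      filter_upwards [haez] with ω hω
      have : f ω ^ 2 = 0 := hω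
      exact pow_eq_zero_iff (n := 2) (by norm_num) |>.1 this
    · intro hc
      have hc' : ∀ᵐ ω ∂ℙ, f ω = 0 := (hae h 0).1 hc
      have key : ∀ h' : H, ⟪h', uCX h⟫ = 0 := by
        intro h'
        rw [huCX h' h]
        rw [integral_eq_zero_of_ae]
        filter_upwards [hc'] with ω hω
        show (⟪h', φ (X ω)⟫ : ℝ) * ⟪h, φ (X ω)⟫ = 0
        have : f ω = 0 := hω
        rw [show (⟪h, φ (X ω)⟫ : ℝ) = f ω from rfl, this, mul_zero]
      have : uCX h = 0 := by
        apply ext_inner_left ℝ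
        intro h'
        rw [key h', inner_zero_right]
      exact this
end

section
/- Under the CME setup (separable RKHSs H on X and G on Y with measurable feature maps φ, ψ; random variables X, Y with E[‖φ(X)‖² + ‖ψ(Y)‖²] < ∞), for all h ∈ H and g ∈ G, Cov[h(X), f_g(X)] = ⟨h, C_{XY} g⟩_H and E[h(X) f_g(X)] = ⟨h, ᵘC_{XY} g⟩_H, where f_g(x) = E[g(Y) | X = x]. -/
open MeasureTheory
open scoped RealInnerProductSpace

/-- In the CME setup (separable RKHSs `H` on `𝒳` and `G` on `𝒴` with
feature maps `φ, ψ`; random variables `X, Y` with `E[‖φ(X)‖² + ‖ψ(Y)‖²] < ∞`;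
`f_g = E[g(Y)|X = ·]`), for all `h ∈ H` and `g ∈ G` one has
`Cov[h(X), f_g(X)] = ⟪h, C_XY g⟫` and `E[h(X) f_g(X)] = ⟪h, ᵘC_XY g⟫`,
where `C_XY = Cov[φ(X), ψ(Y)]` and `ᵘC_XY = E[φ(X) ⊗ ψ(Y)]` are characterised by
`⟪h, C_XY g⟫ = Cov[h(X), g(Y)]` and `⟪h, ᵘC_XY g⟫ = E[h(X) g(Y)]`. -/
theorem statement8 {Ω 𝒳 𝒴 H G : Type*}
    [MeasurableSpace Ω] [MeasurableSpace 𝒳] [MeasurableSpace 𝒴]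
    [NormedAddCommGroup H] [InnerProductSpace ℝ H] [CompleteSpace H]
    [TopologicalSpace.SeparableSpace H]
    [NormedAddCommGroup G] [InnerProductSpace ℝ G] [CompleteSpace G]
    [TopologicalSpace.SeparableSpace G]
    (ℙ : Measure Ω) [IsProbabilityMeasure ℙ]
    (X : Ω → 𝒳) (hX : Measurable X) (Y : Ω → 𝒴) (hY : Measurable Y)
    (φ : 𝒳 → H) (hφ : StronglyMeasurable φ) (ψ : 𝒴 → G) (hψ : StronglyMeasurable ψ)
    (hφ2 : MemLp (fun ω => φ (X ω)) 2 ℙ) (hψ2 : MemLp (fun ω => ψ (Y ω)) 2 ℙ)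
    (CXY uCXY : G →L[ℝ] H)
    (hCXY : ∀ (h : H) (g : G), ⟪h, CXY g⟫ =
      (∫ ω, ⟪h, φ (X ω)⟫ * ⟪g, ψ (Y ω)⟫ ∂ℙ)
        - (∫ ω, ⟪h, φ (X ω)⟫ ∂ℙ) * (∫ ω, ⟪g, ψ (Y ω)⟫ ∂ℙ))
    (huCXY : ∀ (h : H) (g : G), ⟪h, uCXY g⟫ = ∫ ω, ⟪h, φ (X ω)⟫ * ⟪g, ψ (Y ω)⟫ ∂ℙ)
    -- `f_g` is a version of the conditional expectation `E[g(Y) | X = ·]`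
    (fg : G → 𝒳 → ℝ)
    (hfg : ∀ g : G, (fun ω => fg g (X ω)) =ᵐ[ℙ]
      ℙ[(fun ω => ⟪g, ψ (Y ω)⟫) | MeasurableSpace.comap X ‹MeasurableSpace 𝒳›]) :
    ∀ (h : H) (g : G),
      ((∫ ω, ⟪h, φ (X ω)⟫ * fg g (X ω) ∂ℙ)
          - (∫ ω, ⟪h, φ (X ω)⟫ ∂ℙ) * (∫ ω, fg g (X ω) ∂ℙ) = ⟪h, CXY g⟫) ∧
      (∫ ω, ⟪h, φ (X ω)⟫ * fg g (X ω) ∂ℙ = ⟪h, uCXY g⟫) := by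
  intro h g
  have hm : MeasurableSpace.comap X ‹MeasurableSpace 𝒳› ≤ ‹MeasurableSpace Ω› :=
    hX.comap_le
  set m : MeasurableSpace Ω := MeasurableSpace.comap X ‹MeasurableSpace 𝒳› with hm_def
  set A : Ω → ℝ := fun ω => ⟪h, φ (X ω)⟫ with hA_def
  set B : Ω → ℝ := fun ω => ⟪g, ψ (Y ω)⟫ with hB_def
  have hA2 : MemLp A 2 ℙ := hφ2.const_inner h
  have hB2 : MemLp B 2 ℙ := hψ2.const_inner g
  have hBint : Integrable B ℙ := hB2.integrable one_le_two
  have hABmem : MemLp (A • B) 1 ℙ := hB2.smul hA2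
  have hAB : Integrable (A * B) ℙ := by
    have := memLp_one_iff_integrable.mp hABmem
    simpa [smul_eq_mul] using this
  have hXm : Measurable[m] X := fun s hs => ⟨s, hs, rfl⟩
  have hAm : StronglyMeasurable[m] A := by
    have hf : StronglyMeasurable fun x : 𝒳 => ⟪h, φ x⟫ :=
      ((innerSL ℝ h).continuous.comp_stronglyMeasurable hφ)
    exact hf.comp_measurable hXm
  have hkey : ℙ[A * B|m] =ᵐ[ℙ] A * ℙ[B|m] :=
    condExp_mul_of_stronglyMeasurable_left hAm hAB hBint
  have hAfg : (fun ω => A ω * fg g (X ω)) =ᵐ[ℙ] ℙ[A * B|m] := by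
    filter_upwards [hfg g, hkey] with ω h1 h2
    simp only [Pi.mul_apply] at h2 ⊢
    rw [h1, h2]
  have hprod : ∫ ω, A ω * fg g (X ω) ∂ℙ = ∫ ω, A ω * B ω ∂ℙ := by
    rw [integral_congr_ae hAfg]
    simpa [Pi.mul_apply] using integral_condExp hm (f := A * B)
  have hmean : ∫ ω, fg g (X ω) ∂ℙ = ∫ ω, B ω ∂ℙ := by
    rw [integral_congr_ae (hfg g)]
    exact integral_condExp hm
  refine ⟨?_, ?_⟩
  · rw [hCXY h g]
    simp only [hA_def, hB_def] at hprod hmean ⊢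
    rw [hprod, hmean]
  · rw [huCXY h g]
    simpa only [hA_def, hB_def] using hprod
end

section
/- Under the CME setup, the following are equivalent: (i) for each g ∈ G there exists h_g ∈ H with Cov[h_g(X) − f_g(X), h(X)] = 0 for all h ∈ H (Assumption C); (ii) for each g ∈ G there exists h_g ∈ H with C_X h_g = C_{XY} g; (iii) ran C_{XY} ⊆ ran C_X. -/
open MeasureTheory
open scoped RealInnerProductSpace

/-- In the CME setup, the following are equivalent:
(i) Assumption C: for each `g ∈ G` there is `h_g ∈ H` with
`Cov[h_g(X) − f_g(X), h(X)] = 0` for all `h ∈ H`;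
(ii) for each `g ∈ G` there is `h_g ∈ H` with `C_X h_g = C_XY g`;
(iii) `ran C_XY ⊆ ran C_X`. -/
theorem statement9 {Ω 𝒳 𝒴 H G : Type*}
    [MeasurableSpace Ω] [MeasurableSpace 𝒳] [MeasurableSpace 𝒴]
    [NormedAddCommGroup H] [InnerProductSpace ℝ H] [CompleteSpace H]
    [TopologicalSpace.SeparableSpace H]
    [NormedAddCommGroup G] [InnerProductSpace ℝ G] [CompleteSpace G]
    [TopologicalSpace.SeparableSpace G]
    (ℙ : Measure Ω) [IsProbabilityMeasure ℙ]
    (X : Ω → 𝒳) (hX : Measurable X) (Y : Ω → 𝒴) (hY : Measurable Y)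
    (φ : 𝒳 → H) (hφ : StronglyMeasurable φ) (ψ : 𝒴 → G) (hψ : StronglyMeasurable ψ)
    (hφ2 : MemLp (fun ω => φ (X ω)) 2 ℙ) (hψ2 : MemLp (fun ω => ψ (Y ω)) 2 ℙ)
    (CX : H →L[ℝ] H) (CXY : G →L[ℝ] H)
    (hCX : ∀ h h' : H, ⟪h, CX h'⟫ =
      (∫ ω, ⟪h, φ (X ω)⟫ * ⟪h', φ (X ω)⟫ ∂ℙ)
        - (∫ ω, ⟪h, φ (X ω)⟫ ∂ℙ) * (∫ ω, ⟪h', φ (X ω)⟫ ∂ℙ))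
    (hCXY : ∀ (h : H) (g : G), ⟪h, CXY g⟫ =
      (∫ ω, ⟪h, φ (X ω)⟫ * ⟪g, ψ (Y ω)⟫ ∂ℙ)
        - (∫ ω, ⟪h, φ (X ω)⟫ ∂ℙ) * (∫ ω, ⟪g, ψ (Y ω)⟫ ∂ℙ))
    -- `f_g` is a version of the conditional expectation `E[g(Y) | X = ·]`
    (fg : G → 𝒳 → ℝ)
    (hfg : ∀ g : G, (fun ω => fg g (X ω)) =ᵐ[ℙ]
      ℙ[(fun ω => ⟪g, ψ (Y ω)⟫) | MeasurableSpace.comap X ‹MeasurableSpace 𝒳›]) :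
    ((∀ g : G, ∃ hg : H, ∀ h : H,
        (∫ ω, (⟪hg, φ (X ω)⟫ - fg g (X ω)) * ⟪h, φ (X ω)⟫ ∂ℙ)
          - (∫ ω, ⟪hg, φ (X ω)⟫ - fg g (X ω) ∂ℙ) * (∫ ω, ⟪h, φ (X ω)⟫ ∂ℙ) = 0) ↔
      (∀ g : G, ∃ hg : H, CX hg = CXY g)) ∧
    ((∀ g : G, ∃ hg : H, CX hg = CXY g) ↔ Set.range CXY ⊆ Set.range CX) := by
  constructor
  · -- (i) ↔ (ii)
    refine forall_congr' fun g => exists_congr fun hg => ?_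
    set m : MeasurableSpace Ω := MeasurableSpace.comap X ‹MeasurableSpace 𝒳› with hm_def
    have hm := hX.comap_le
    set F : Ω → ℝ := fun ω => ⟪g, ψ (Y ω)⟫ with hF_def
    have hF2 : MemLp F 2 ℙ := hψ2.const_inner g
    have hFint : Integrable F ℙ := hF2.integrable one_le_two
    have hfg' : (fun ω => fg g (X ω)) =ᵐ[ℙ] ℙ[F|m] := hfg g
    -- key integral identities
    have key : ∀ h : H,
        (∫ ω, fg g (X ω) * ⟪h, φ (X ω)⟫ ∂ℙ) = ∫ ω, ⟪h, φ (X ω)⟫ * F ω ∂ℙ := by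
      intro h
      set Hh : Ω → ℝ := fun ω => ⟪h, φ (X ω)⟫ with hHh_def
      have hH2 : MemLp Hh 2 ℙ := hφ2.const_inner h
      have hHm : StronglyMeasurable[m] Hh := by
        have h1 : StronglyMeasurable fun x : 𝒳 => ⟪h, φ x⟫ :=
          stronglyMeasurable_const.inner hφ
        exact h1.comp_measurable (measurable_iff_comap_le.mpr le_rfl)
      have hmulint : Integrable (Hh * F) ℙ := by
        have : MemLp (Hh • F) 1 ℙ :=
          hF2.smul hH2 (hpqr := ⟨by rw [inv_one, ENNReal.inv_two_add_inv_two]⟩)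
        exact memLp_one_iff_integrable.mp this
      have hpull : ℙ[Hh * F|m] =ᵐ[ℙ] Hh * ℙ[F|m] :=
        condExp_mul_of_stronglyMeasurable_left hHm hmulint hFint
      calc (∫ ω, fg g (X ω) * Hh ω ∂ℙ)
          = ∫ ω, (ℙ[F|m]) ω * Hh ω ∂ℙ := by
            refine integral_congr_ae ?_
            filter_upwards [hfg'] with ω hω
            rw [hω]
        _ = ∫ ω, (ℙ[Hh * F|m]) ω ∂ℙ := by
            refine integral_congr_ae ?_
            filter_upwards [hpull] with ω hω
            rw [hω]; simp [mul_comm]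
        _ = ∫ ω, (Hh * F) ω ∂ℙ := integral_condExp hm
        _ = ∫ ω, Hh ω * F ω ∂ℙ := rfl
    have key0 : (∫ ω, fg g (X ω) ∂ℙ) = ∫ ω, F ω ∂ℙ := by
      calc (∫ ω, fg g (X ω) ∂ℙ) = ∫ ω, (ℙ[F|m]) ω ∂ℙ := integral_congr_ae hfg'
        _ = ∫ ω, F ω ∂ℙ := integral_condExp hm
    -- rewrite the covariance expression
    have cov_eq : ∀ h : H,
        (∫ ω, (⟪hg, φ (X ω)⟫ - fg g (X ω)) * ⟪h, φ (X ω)⟫ ∂ℙ)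
          - (∫ ω, ⟪hg, φ (X ω)⟫ - fg g (X ω) ∂ℙ) * (∫ ω, ⟪h, φ (X ω)⟫ ∂ℙ)
        = ⟪h, CX hg⟫ - ⟪h, CXY g⟫ := by
      intro h
      set Hh : Ω → ℝ := fun ω => ⟪h, φ (X ω)⟫ with hHh_def
      have hH2 : MemLp Hh 2 ℙ := hφ2.const_inner h
      have hHint : Integrable Hh ℙ := hH2.integrable one_le_two
      have hG2 : MemLp (fun ω => (⟪hg, φ (X ω)⟫ : ℝ)) 2 ℙ := hφ2.const_inner hg
      have hGint : Integrable (fun ω => (⟪hg, φ (X ω)⟫ : ℝ)) ℙ := hG2.integrable one_le_two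
      have hGH : Integrable (fun ω => (⟪hg, φ (X ω)⟫ : ℝ) * Hh ω) ℙ := by
        have : MemLp ((fun ω => (⟪hg, φ (X ω)⟫ : ℝ)) • Hh) 1 ℙ :=
          hH2.smul hG2 (hpqr := ⟨by rw [inv_one, ENNReal.inv_two_add_inv_two]⟩)
        exact memLp_one_iff_integrable.mp this
      have hfgHint : Integrable (fun ω => fg g (X ω) * Hh ω) ℙ := by
        have hHm : StronglyMeasurable[m] Hh := by
          have h1 : StronglyMeasurable fun x : 𝒳 => ⟪h, φ x⟫ :=
            stronglyMeasurable_const.inner hφ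
          exact h1.comp_measurable (measurable_iff_comap_le.mpr le_rfl)
        have hmulint : Integrable (Hh * F) ℙ := by
          have : MemLp (Hh • F) 1 ℙ :=
            hF2.smul hH2 (hpqr := ⟨by rw [inv_one, ENNReal.inv_two_add_inv_two]⟩)
          rw [← memLp_one_iff_integrable]
          simpa [smul_eq_mul] using this
        have hpull : ℙ[Hh * F|m] =ᵐ[ℙ] Hh * ℙ[F|m] :=
          condExp_mul_of_stronglyMeasurable_left hHm hmulint hFint
        have : Integrable (fun ω => (ℙ[Hh * F|m]) ω) ℙ := integrable_condExp
        refine this.congr ?_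
        filter_upwards [hpull, hfg'] with ω h1 h2
        rw [h1]; simp [h2, mul_comm]
      have hfgint : Integrable (fun ω => fg g (X ω)) ℙ :=
        integrable_condExp.congr hfg'.symm
      have e1 : (∫ ω, (⟪hg, φ (X ω)⟫ - fg g (X ω)) * Hh ω ∂ℙ)
          = (∫ ω, (⟪hg, φ (X ω)⟫ : ℝ) * Hh ω ∂ℙ) - ∫ ω, fg g (X ω) * Hh ω ∂ℙ := by
        rw [← integral_sub hGH hfgHint]
        congr 1; funext ω; ring
      have e2 : (∫ ω, ⟪hg, φ (X ω)⟫ - fg g (X ω) ∂ℙ)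
          = (∫ ω, (⟪hg, φ (X ω)⟫ : ℝ) ∂ℙ) - ∫ ω, fg g (X ω) ∂ℙ :=
        integral_sub hGint hfgint
      rw [e1, e2, key h, key0, hCX h hg, hCXY h g]
      have : (∫ ω, (⟪hg, φ (X ω)⟫ : ℝ) * Hh ω ∂ℙ) = ∫ ω, Hh ω * ⟪hg, φ (X ω)⟫ ∂ℙ := by
        congr 1; funext ω; ring
      rw [this]
      ring
    constructor
    · intro hcov
      have h0 : ∀ h : H, ⟪h, CX hg - CXY g⟫ = 0 := by
        intro h
        have := hcov h
        rw [cov_eq h] at this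
        rw [inner_sub_right]
        linarith
      exact sub_eq_zero.mp (inner_self_eq_zero.mp (h0 (CX hg - CXY g)))
    · intro heq h
      rw [cov_eq h, heq, sub_self]
  · -- (ii) ↔ (iii)
    constructor
    · rintro h x ⟨g, rfl⟩
      obtain ⟨hg, hhg⟩ := h g
      exact ⟨hg, hhg⟩
    · intro h g
      obtain ⟨hg, hhg⟩ := h ⟨g, rfl⟩
      exact ⟨hg, hhg⟩
end

section
/- Under the CME setup, if Assumption C holds (equivalently ran C_{XY} ⊆ ran C_X), then for every g ∈ G the choice h_g = C_X† C_{XY} g satisfies Cov[(C_X† C_{XY} g)(X) − f_g(X), h(X)] = 0 for all h ∈ H. Moreover, if for some g ∈ G there exist h' ∈ H and c' ∈ ℝ with f_g = h' + c' P_X-a.e., then there exists a constant c_g ∈ ℝ such that f_g = c_g + C_X† C_{XY} g holds P_X-a.e. -/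
open MeasureTheory
open scoped RealInnerProductSpace

private lemma int_mul' {α : Type*} [MeasurableSpace α] {μ : Measure α} {f g : α → ℝ}
    (hf : MemLp f 2 μ) (hg : MemLp g 2 μ) : Integrable (fun x => f x * g x) μ := by
  have h := L2.integrable_inner (𝕜 := ℝ) (hf.toLp f) (hg.toLp g)
  refine h.congr ?_
  filter_upwards [hf.coeFn_toLp, hg.coeFn_toLp] with x h1 h2
  simp [h1, h2, RCLike.inner_apply, mul_comm]

private lemma ae_const_of_var_zero' {α : Type*} [MeasurableSpace α] {μ : Measure α}
    [IsProbabilityMeasure μ] {u : α → ℝ} (hu : MemLp u 2 μ)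
    (h0 : (∫ x, u x * u x ∂μ) - (∫ x, u x ∂μ) * (∫ x, u x ∂μ) = 0) :
    ∀ᵐ x ∂μ, u x = ∫ x, u x ∂μ := by
  set m := ∫ x, u x ∂μ with hm
  have hui : Integrable u μ := hu.integrable one_le_two
  have huu : Integrable (fun x => u x * u x) μ := int_mul' hu hu
  have hrw : (fun x => (u x - m) ^ 2) = fun x => (u x * u x - (2 * m) * u x) + m * m := by
    funext x; ring
  have hint : Integrable (fun x => (u x - m) ^ 2) μ := by
    rw [hrw]
    exact Integrable.add (huu.sub (hui.const_mul _)) (integrable_const _)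
  have hzero : (∫ x, (u x - m) ^ 2 ∂μ) = 0 := by
    have hA : Integrable (fun x => u x * u x - 2 * m * u x) μ :=
      huu.sub (hui.const_mul _)
    have h1 : (∫ x, (u x - m) ^ 2 ∂μ)
        = (∫ x, u x * u x ∂μ) - (2 * m) * (∫ x, u x ∂μ) + m * m := by
      rw [hrw, integral_add hA (integrable_const _),
        integral_sub huu (hui.const_mul _), integral_const_mul, integral_const]
      simp
    rw [h1, ← hm]
    nlinarith [h0]
  have hae := (integral_eq_zero_iff_of_nonneg_ae
    (Filter.Eventually.of_forall fun x => sq_nonneg (u x - m)) hint).mp hzero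
  filter_upwards [hae] with x hx
  have h2 : (u x - m) ^ 2 = 0 := hx
  have h3 := pow_eq_zero_iff (n := 2) (by norm_num) |>.mp h2
  linarith [h3]

/-- In the CME setup, if Assumption C holds (equivalently
`ran C_XY ⊆ ran C_X`), then the choice `h_g = C_X† C_XY g` works: writing `Q` for the
operator `C_X† C_XY` (characterised, via Douglas' theorem, by `C_X Q = C_XY`,
`ker Q = ker C_XY`, `ran Q ⊆ closure (ran C_X)`; note `ran C_X* = ran C_X`), one has
`Cov[(Q g)(X) − f_g(X), h(X)] = 0` for all `h ∈ H`, `g ∈ G`.  Moreover, if for some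
`g ∈ G` there are `h' ∈ H`, `c' ∈ ℝ` with `f_g = h' + c'` `P_X`-a.e., then there is a
constant `c_g` with `f_g = c_g + Q g` `P_X`-a.e. -/
theorem statement10 {Ω 𝒳 𝒴 H G : Type*}
    [MeasurableSpace Ω] [MeasurableSpace 𝒳] [MeasurableSpace 𝒴]
    [NormedAddCommGroup H] [InnerProductSpace ℝ H] [CompleteSpace H]
    [TopologicalSpace.SeparableSpace H]
    [NormedAddCommGroup G] [InnerProductSpace ℝ G] [CompleteSpace G]
    [TopologicalSpace.SeparableSpace G]
    (ℙ : Measure Ω) [IsProbabilityMeasure ℙ]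
    (X : Ω → 𝒳) (hX : Measurable X) (Y : Ω → 𝒴) (hY : Measurable Y)
    (φ : 𝒳 → H) (hφ : StronglyMeasurable φ) (ψ : 𝒴 → G) (hψ : StronglyMeasurable ψ)
    (hφ2 : MemLp (fun ω => φ (X ω)) 2 ℙ) (hψ2 : MemLp (fun ω => ψ (Y ω)) 2 ℙ)
    (CX : H →L[ℝ] H) (CXY : G →L[ℝ] H)
    (hCX : ∀ h h' : H, ⟪h, CX h'⟫ =
      (∫ ω, ⟪h, φ (X ω)⟫ * ⟪h', φ (X ω)⟫ ∂ℙ)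
        - (∫ ω, ⟪h, φ (X ω)⟫ ∂ℙ) * (∫ ω, ⟪h', φ (X ω)⟫ ∂ℙ))
    (hCXY : ∀ (h : H) (g : G), ⟪h, CXY g⟫ =
      (∫ ω, ⟪h, φ (X ω)⟫ * ⟪g, ψ (Y ω)⟫ ∂ℙ)
        - (∫ ω, ⟪h, φ (X ω)⟫ ∂ℙ) * (∫ ω, ⟪g, ψ (Y ω)⟫ ∂ℙ))
    (fg : G → 𝒳 → ℝ)
    (hfg : ∀ g : G, (fun ω => fg g (X ω)) =ᵐ[ℙ]
      ℙ[(fun ω => ⟪g, ψ (Y ω)⟫) | MeasurableSpace.comap X ‹MeasurableSpace 𝒳›])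
    -- Assumption C, in the form of the range inclusion
    (hran : Set.range CXY ⊆ Set.range CX)
    -- `Q` is the operator `C_X† C_XY`, via its Douglas characterisation
    (Q : G →L[ℝ] H)
    (hQ1 : CX.comp Q = CXY) (hQ2 : LinearMap.ker (Q : G →ₗ[ℝ] H) = LinearMap.ker (CXY : G →ₗ[ℝ] H))
    (hQ3 : Set.range Q ⊆ closure (Set.range CX)) :
    (∀ (g : G) (h : H),
      (∫ ω, (⟪Q g, φ (X ω)⟫ - fg g (X ω)) * ⟪h, φ (X ω)⟫ ∂ℙ)
        - (∫ ω, ⟪Q g, φ (X ω)⟫ - fg g (X ω) ∂ℙ) * (∫ ω, ⟪h, φ (X ω)⟫ ∂ℙ) = 0) ∧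
    (∀ g : G,
      (∃ (h' : H) (c' : ℝ), fg g =ᵐ[ℙ.map X] fun x => ⟪h', φ x⟫ + c') →
      ∃ c : ℝ, fg g =ᵐ[ℙ.map X] fun x => c + ⟪Q g, φ x⟫) := by
  have hmle : MeasurableSpace.comap X ‹MeasurableSpace 𝒳› ≤ ‹MeasurableSpace Ω› :=
    hX.comap_le
  have hXm : Measurable[MeasurableSpace.comap X ‹MeasurableSpace 𝒳›] X :=
    fun s hs => ⟨s, hs, rfl⟩
  haveI : SigmaFinite (ℙ.trim hmle) := by infer_instance
  have hmem : ∀ h : H, MemLp (fun ω => ⟪h, φ (X ω)⟫) 2 ℙ := fun h => hφ2.const_inner h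
  have hint : ∀ h : H, Integrable (fun ω => ⟪h, φ (X ω)⟫) ℙ :=
    fun h => (hmem h).integrable one_le_two
  -- Part 1
  have key : ∀ (g : G) (h : H),
      (∫ ω, (⟪Q g, φ (X ω)⟫ - fg g (X ω)) * ⟪h, φ (X ω)⟫ ∂ℙ)
        - (∫ ω, ⟪Q g, φ (X ω)⟫ - fg g (X ω) ∂ℙ) * (∫ ω, ⟪h, φ (X ω)⟫ ∂ℙ) = 0 := by
    intro g h
    set a : Ω → ℝ := fun ω => ⟪Q g, φ (X ω)⟫ with ha
    set c : Ω → ℝ := fun ω => ⟪h, φ (X ω)⟫ with hc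
    set Z : Ω → ℝ := fun ω => ⟪g, ψ (Y ω)⟫ with hZ
    have ha2 : MemLp a 2 ℙ := hmem (Q g)
    have hc2 : MemLp c 2 ℙ := hmem h
    have hZ2 : MemLp Z 2 ℙ := hψ2.const_inner g
    have haint : Integrable a ℙ := ha2.integrable one_le_two
    have hcint : Integrable c ℙ := hc2.integrable one_le_two
    have hZint : Integrable Z ℙ := hZ2.integrable one_le_two
    have hcm : StronglyMeasurable[MeasurableSpace.comap X ‹MeasurableSpace 𝒳›] c :=
      (stronglyMeasurable_const.inner hφ).comp_measurable hXm
    have hcZint : Integrable (c * Z) ℙ := int_mul' hc2 hZ2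
    have hpull : ℙ[c * Z|MeasurableSpace.comap X ‹MeasurableSpace 𝒳›] =ᵐ[ℙ] c * ℙ[Z|MeasurableSpace.comap X ‹MeasurableSpace 𝒳›] :=
      condExp_mul_of_stronglyMeasurable_left hcm hcZint hZint
    have hcE_int : Integrable (c * ℙ[Z|MeasurableSpace.comap X ‹MeasurableSpace 𝒳›]) ℙ := integrable_condExp.congr hpull
    have hb : (fun ω => fg g (X ω)) =ᵐ[ℙ] ℙ[Z|MeasurableSpace.comap X ‹MeasurableSpace 𝒳›] := hfg g
    have hbc_int : Integrable (fun ω => fg g (X ω) * c ω) ℙ := by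
      refine hcE_int.congr ?_
      filter_upwards [hb] with ω hω
      simp only [Pi.mul_apply, hω, mul_comm]
    have hbint : Integrable (fun ω => fg g (X ω)) ℙ := integrable_condExp.congr hb.symm
    have hIb : (∫ ω, fg g (X ω) ∂ℙ) = ∫ ω, Z ω ∂ℙ :=
      (integral_congr_ae hb).trans (integral_condExp hmle)
    have hIbc : (∫ ω, fg g (X ω) * c ω ∂ℙ) = ∫ ω, c ω * Z ω ∂ℙ := by
      have h1 : (∫ ω, fg g (X ω) * c ω ∂ℙ) = ∫ ω, (ℙ[c * Z|MeasurableSpace.comap X ‹MeasurableSpace 𝒳›]) ω ∂ℙ := by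
        refine integral_congr_ae ?_
        filter_upwards [hb, hpull] with ω h1 h2
        simp only [h2, Pi.mul_apply, h1, mul_comm]
      rw [h1, integral_condExp hmle]
      rfl
    have hsplit1 : (∫ ω, (a ω - fg g (X ω)) * c ω ∂ℙ)
        = (∫ ω, a ω * c ω ∂ℙ) - ∫ ω, fg g (X ω) * c ω ∂ℙ := by
      rw [← integral_sub (int_mul' ha2 hc2) hbc_int]
      exact integral_congr_ae (Filter.Eventually.of_forall fun ω => by ring)
    have hsplit2 : (∫ ω, a ω - fg g (X ω) ∂ℙ)
        = (∫ ω, a ω ∂ℙ) - ∫ ω, fg g (X ω) ∂ℙ := integral_sub haint hbint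
    have hop : CX (Q g) = CXY g := by
      have h3 := ContinuousLinearMap.ext_iff.mp hQ1 g
      simpa using h3
    have h1 := hCX h (Q g)
    have h2 := hCXY h g
    rw [hop, h2] at h1
    have hca : (∫ ω, c ω * a ω ∂ℙ) = ∫ ω, a ω * c ω ∂ℙ :=
      integral_congr_ae (Filter.Eventually.of_forall fun ω => mul_comm _ _)
    rw [hca] at h1
    rw [hsplit1, hsplit2, hIb, hIbc]
    linarith [h1]
  refine ⟨key, ?_⟩
  rintro g ⟨h', c', hgc⟩
  set a : Ω → ℝ := fun ω => ⟪Q g, φ (X ω)⟫ with ha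
  set b' : Ω → ℝ := fun ω => ⟪h', φ (X ω)⟫ with hb'
  have ha2 : MemLp a 2 ℙ := hmem (Q g)
  have haint : Integrable a ℙ := ha2.integrable one_le_two
  have hgcΩ : ∀ᵐ ω ∂ℙ, fg g (X ω) = ⟪h', φ (X ω)⟫ + c' :=
    ae_of_ae_map hX.aemeasurable hgc
  -- CX (Q g - h') = 0
  have hCX0 : CX (Q g - h') = 0 := by
    have hall : ∀ h : H, ⟪h, CX (Q g - h')⟫ = 0 := by
      intro h
      set c : Ω → ℝ := fun ω => ⟪h, φ (X ω)⟫ with hc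
      have hcint : Integrable c ℙ := hint h
      have hkey := key g h
      have e1 : (fun ω => (a ω - fg g (X ω)) * c ω) =ᵐ[ℙ]
          fun ω => a ω * c ω - (b' ω * c ω + c' * c ω) := by
        filter_upwards [hgcΩ] with ω hω
        simp only [ha, hb', hc] at *
        rw [hω]; ring
      have e2 : (fun ω => a ω - fg g (X ω)) =ᵐ[ℙ] fun ω => a ω - (b' ω + c') := by
        filter_upwards [hgcΩ] with ω hω
        simp only [ha, hb', hc] at *
        rw [hω]
      have hb'c_int : Integrable (fun ω => b' ω * c ω) ℙ := int_mul' (hmem h') (hmem h)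
      have hsum1 : Integrable (fun ω => b' ω * c ω + c' * c ω) ℙ :=
        hb'c_int.add (hcint.const_mul c')
      have hsum2 : Integrable (fun ω => b' ω + c') ℙ :=
        (hint h').add (integrable_const _)
      rw [integral_congr_ae e1, integral_congr_ae e2,
        integral_sub (int_mul' ha2 (hmem h)) hsum1,
        integral_add hb'c_int (hcint.const_mul c'), integral_const_mul,
        integral_sub haint hsum2,
        integral_add (hint h') (integrable_const _), integral_const] at hkey
      simp only [measure_univ, ENNReal.toReal_one, probReal_univ, smul_eq_mul, one_mul] at hkey
      have hsub : ⟪h, CX (Q g - h')⟫ = ⟪h, CX (Q g)⟫ - ⟪h, CX h'⟫ := by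
        rw [map_sub, inner_sub_right]
      rw [hsub, hCX h (Q g), hCX h h']
      have hca : (∫ ω, ⟪h, φ (X ω)⟫ * ⟪Q g, φ (X ω)⟫ ∂ℙ) = ∫ ω, a ω * c ω ∂ℙ :=
        integral_congr_ae (Filter.Eventually.of_forall fun ω => mul_comm _ _)
      have hcb : (∫ ω, ⟪h, φ (X ω)⟫ * ⟪h', φ (X ω)⟫ ∂ℙ) = ∫ ω, b' ω * c ω ∂ℙ :=
        integral_congr_ae (Filter.Eventually.of_forall fun ω => mul_comm _ _)
      rw [hca, hcb]
      ring_nf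
      ring_nf at hkey
      linarith [hkey]
    exact inner_self_eq_zero.mp (hall (CX (Q g - h')))
  -- variance argument
  set h₀ : H := Q g - h' with hh₀
  have hu2 : MemLp (fun ω => ⟪h₀, φ (X ω)⟫) 2 ℙ := hmem h₀
  have hvar : (∫ ω, ⟪h₀, φ (X ω)⟫ * ⟪h₀, φ (X ω)⟫ ∂ℙ)
      - (∫ ω, ⟪h₀, φ (X ω)⟫ ∂ℙ) * (∫ ω, ⟪h₀, φ (X ω)⟫ ∂ℙ) = 0 := by
    have h1 := hCX h₀ h₀
    rw [hCX0] at h1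
    simp only [inner_zero_right] at h1
    linarith [h1]
  have hconstΩ := ae_const_of_var_zero' hu2 hvar
  set d : ℝ := ∫ ω, ⟪h₀, φ (X ω)⟫ ∂ℙ with hd
  have hset : MeasurableSet {x : 𝒳 | ⟪h₀, φ x⟫ = d} := by
    have hsm : StronglyMeasurable fun x : 𝒳 => ⟪h₀, φ x⟫ :=
      stronglyMeasurable_const.inner hφ
    exact hsm.measurable (measurableSet_singleton d)
  have hconstμ : ∀ᵐ x ∂ℙ.map X, ⟪h₀, φ x⟫ = d :=
    (ae_map_iff hX.aemeasurable hset).mpr hconstΩ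
  refine ⟨c' - d, ?_⟩
  filter_upwards [hgc, hconstμ] with x h1 h2
  rw [h1]
  rw [hh₀, inner_sub_left] at h2
  linarith [h2]
end

section
/- Under the CME setup, if the kernel k is characteristic (the kernel mean embedding Q ↦ ∫ φ dQ is injective on probability measures with integrable embedding), then the space H_C of RKHS functions modulo constants is dense in L²_C(P_X), the space of L²(P_X) functions modulo P_X-a.e. constant functions (with inner product ⟨[f₁],[f₂]⟩ = Cov[f₁(X), f₂(X)]). -/
open MeasureTheory
open scoped RealInnerProductSpace
open scoped NNReal ENNReal

/-- Auxiliary: if `G ∈ L²`, `∫ G = 0`, `∫ G • φ = 0` and the kernel is characteristic,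
then `G = 0` a.e. -/
theorem aux_zero {𝒳 H : Type*} [MeasurableSpace 𝒳]
    [NormedAddCommGroup H] [InnerProductSpace ℝ H] [CompleteSpace H]
    (P : Measure 𝒳) [IsProbabilityMeasure P]
    (φ : 𝒳 → H) (hφ2 : MemLp φ 2 P)
    (hchar : ∀ Q₁ Q₂ : Measure 𝒳, IsProbabilityMeasure Q₁ → IsProbabilityMeasure Q₂ →
      Integrable φ Q₁ → Integrable φ Q₂ →
      (∫ x, φ x ∂Q₁) = (∫ x, φ x ∂Q₂) → Q₁ = Q₂)
    (G : 𝒳 → ℝ) (hG2 : MemLp G 2 P)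
    (hGint : ∫ x, G x ∂P = 0)
    (hGφ : ∫ x, G x • φ x ∂P = 0) : G =ᵐ[P] 0 := by
  have hGi : Integrable G P := hG2.integrable one_le_two
  have hφi : Integrable φ P := hφ2.integrable one_le_two
  set Gp : 𝒳 → ℝ := fun x => max (G x) 0 with hGp_def
  set Gm : 𝒳 → ℝ := fun x => max (-G x) 0 with hGm_def
  have hGp2 : MemLp Gp 2 P := hG2.pos_part
  have hGm2 : MemLp Gm 2 P := hG2.neg.pos_part
  have hGpi : Integrable Gp P := hGp2.integrable one_le_two
  have hGmi : Integrable Gm P := hGm2.integrable one_le_two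
  have hsplit : ∀ x, Gp x = Gm x + G x := by
    intro x
    rcases le_total (G x) 0 with h|h <;>
      simp [hGp_def, hGm_def, max_eq_left, max_eq_right, *] <;> linarith
  -- integrals of positive and negative parts agree
  have hint_eq : ∫ x, Gp x ∂P = ∫ x, Gm x ∂P := by
    calc ∫ x, Gp x ∂P = ∫ x, (Gm x + G x) ∂P := by
          exact integral_congr_ae (Filter.Eventually.of_forall hsplit)
      _ = ∫ x, Gm x ∂P + ∫ x, G x ∂P := integral_add hGmi hGi
      _ = ∫ x, Gm x ∂P := by rw [hGint, add_zero]
  set Z : ℝ := (∫ x, Gp x ∂P) + 1 with hZ_def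
  have hZpos : 0 < Z := by
    have : 0 ≤ ∫ x, Gp x ∂P := integral_nonneg fun x => le_max_right _ _
    linarith
  have hZne : ENNReal.ofReal Z ≠ 0 := by
    simp [ENNReal.ofReal_eq_zero, not_le, hZpos]
  have hZnetop : ENNReal.ofReal Z ≠ ⊤ := ENNReal.ofReal_ne_top
  -- densities
  set d₁ : 𝒳 → ℝ≥0 := fun x => Real.toNNReal (Gp x + 1) with hd₁_def
  set d₂ : 𝒳 → ℝ≥0 := fun x => Real.toNNReal (Gm x + 1) with hd₂_def
  have hGm_meas : AEMeasurable G P := hG2.aestronglyMeasurable.aemeasurable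
  have hd₁m : AEMeasurable d₁ P := by
    exact ((hGm_meas.max aemeasurable_const).add aemeasurable_const).real_toNNReal
  have hd₂m : AEMeasurable d₂ P := by
    exact ((hGm_meas.neg.max aemeasurable_const).add aemeasurable_const).real_toNNReal
  have hd₁c : ∀ x, ((d₁ x : ℝ≥0∞)) = ENNReal.ofReal (Gp x + 1) := fun x => rfl
  have hd₂c : ∀ x, ((d₂ x : ℝ≥0∞)) = ENNReal.ofReal (Gm x + 1) := fun x => rfl
  have hGp_nn : ∀ x, (0:ℝ) ≤ Gp x := fun x => le_max_right _ _
  have hGm_nn : ∀ x, (0:ℝ) ≤ Gm x := fun x => le_max_right _ _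
  have hd₁r : ∀ x, ((d₁ x : ℝ)) = Gp x + 1 := by
    intro x
    have : (0:ℝ) ≤ Gp x + 1 := by have := hGp_nn x; linarith
    simp [hd₁_def, Real.coe_toNNReal _ this]
  have hd₂r : ∀ x, ((d₂ x : ℝ)) = Gm x + 1 := by
    intro x
    have : (0:ℝ) ≤ Gm x + 1 := by have := hGm_nn x; linarith
    simp [hd₂_def, Real.coe_toNNReal _ this]
  -- lintegrals of densities
  have hexp : (1:ℝ≥0∞)/1 = 1/2 + 1/2 := by
    simp [one_div, ENNReal.inv_two_add_inv_two]
  have hGp1i : Integrable (fun x => Gp x + 1) P := hGpi.add (integrable_const 1)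
  have hGm1i : Integrable (fun x => Gm x + 1) P := hGmi.add (integrable_const 1)
  have hl₁ : ∫⁻ x, (d₁ x : ℝ≥0∞) ∂P = ENNReal.ofReal Z := by
    simp_rw [hd₁c]
    rw [← ofReal_integral_eq_lintegral_ofReal hGp1i
        (Filter.Eventually.of_forall fun x => by
          simp only [Pi.zero_apply]; have := hGp_nn x; linarith)]
    congr 1
    rw [integral_add hGpi (integrable_const 1)]
    simp [hZ_def]
  have hl₂ : ∫⁻ x, (d₂ x : ℝ≥0∞) ∂P = ENNReal.ofReal Z := by
    simp_rw [hd₂c]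
    rw [← ofReal_integral_eq_lintegral_ofReal hGm1i
        (Filter.Eventually.of_forall fun x => by
          simp only [Pi.zero_apply]; have := hGm_nn x; linarith)]
    congr 1
    rw [integral_add hGmi (integrable_const 1)]
    simp [hZ_def, hint_eq]
  -- the two measures
  set Q₁ : Measure 𝒳 := (ENNReal.ofReal Z)⁻¹ • P.withDensity (fun x => (d₁ x : ℝ≥0∞)) with hQ₁
  set Q₂ : Measure 𝒳 := (ENNReal.ofReal Z)⁻¹ • P.withDensity (fun x => (d₂ x : ℝ≥0∞)) with hQ₂
  have hP₁ : IsProbabilityMeasure Q₁ := by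
    constructor
    rw [hQ₁]
    simp only [Measure.smul_apply, smul_eq_mul]
    rw [withDensity_apply _ MeasurableSet.univ, setLIntegral_univ, hl₁,
      ENNReal.inv_mul_cancel hZne hZnetop]
  have hP₂ : IsProbabilityMeasure Q₂ := by
    constructor
    rw [hQ₂]
    simp only [Measure.smul_apply, smul_eq_mul]
    rw [withDensity_apply _ MeasurableSet.univ, setLIntegral_univ, hl₂,
      ENNReal.inv_mul_cancel hZne hZnetop]
  -- integrability of φ with the new measures
  have hint₁' : Integrable (fun x => (d₁ x : ℝ) • φ x) P := by
    have : MemLp (fun x => (d₁ x : ℝ)) 2 P := by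
      have h2 : MemLp (fun x => Gp x + 1) 2 P := hGp2.add (memLp_const (1:ℝ))
      rwa [show (fun x => ((d₁ x : ℝ))) = fun x => Gp x + 1 from funext hd₁r]
    exact memLp_one_iff_integrable.mp
      (hφ2.smul (φ := fun x => (d₁ x : ℝ)) this (r := 1))
  have hint₂' : Integrable (fun x => (d₂ x : ℝ) • φ x) P := by
    have : MemLp (fun x => (d₂ x : ℝ)) 2 P := by
      have h2 : MemLp (fun x => Gm x + 1) 2 P := hGm2.add (memLp_const (1:ℝ))
      rwa [show (fun x => ((d₂ x : ℝ))) = fun x => Gm x + 1 from funext hd₂r]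
    exact memLp_one_iff_integrable.mp
      (hφ2.smul (φ := fun x => (d₂ x : ℝ)) this (r := 1))
  have hI₁ : Integrable φ Q₁ := by
    rw [hQ₁]
    exact ((integrable_withDensity_iff_integrable_smul₀ hd₁m).mpr hint₁').smul_measure
      (by simp [hZne])
  have hI₂ : Integrable φ Q₂ := by
    rw [hQ₂]
    exact ((integrable_withDensity_iff_integrable_smul₀ hd₂m).mpr hint₂').smul_measure
      (by simp [hZne])
  -- integrals agree
  have hGpφ : Integrable (fun x => Gp x • φ x) P :=
    memLp_one_iff_integrable.mp (hφ2.smul (φ := Gp) hGp2 (r := 1))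
  have hGmφ : Integrable (fun x => Gm x • φ x) P :=
    memLp_one_iff_integrable.mp (hφ2.smul (φ := Gm) hGm2 (r := 1))
  have hGφ' : Integrable (fun x => G x • φ x) P :=
    memLp_one_iff_integrable.mp (hφ2.smul (φ := G) hG2 (r := 1))
  have hmean : ∫ x, φ x ∂Q₁ = ∫ x, φ x ∂Q₂ := by
    rw [hQ₁, hQ₂, integral_smul_measure, integral_smul_measure,
      integral_withDensity_eq_integral_smul₀ hd₁m, integral_withDensity_eq_integral_smul₀ hd₂m]
    congr 1
    simp only [NNReal.smul_def]
    have hMG : Integrable (fun x => Gm x • φ x + G x • φ x) P := hGmφ.add hGφ'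
    have e₁ : ∫ x, (d₁ x : ℝ) • φ x ∂P
        = ∫ x, Gm x • φ x ∂P + ∫ x, G x • φ x ∂P + ∫ x, φ x ∂P := by
      have step : ∫ x, (d₁ x : ℝ) • φ x ∂P
          = ∫ x, (Gm x • φ x + G x • φ x) + φ x ∂P := by
        refine integral_congr_ae (Filter.Eventually.of_forall fun x => ?_)
        simp only [hd₁r, hsplit, add_smul, one_smul]
      rw [step, integral_add hMG hφi, integral_add hGmφ hGφ']
    have e₂ : ∫ x, (d₂ x : ℝ) • φ x ∂P = ∫ x, Gm x • φ x ∂P + ∫ x, φ x ∂P := by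
      have step : ∫ x, (d₂ x : ℝ) • φ x ∂P = ∫ x, Gm x • φ x + φ x ∂P := by
        refine integral_congr_ae (Filter.Eventually.of_forall fun x => ?_)
        simp only [hd₂r, add_smul, one_smul]
      rw [step, integral_add hGmφ hφi]
    rw [e₁, e₂, hGφ, add_zero]
  -- characteristic kernel ⇒ the two measures agree
  have hQeq : Q₁ = Q₂ := hchar Q₁ Q₂ hP₁ hP₂ hI₁ hI₂ hmean
  have hwd : P.withDensity (fun x => (d₁ x : ℝ≥0∞))
      = P.withDensity (fun x => (d₂ x : ℝ≥0∞)) := by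
    have := congrArg (fun m : Measure 𝒳 => (ENNReal.ofReal Z) • m) hQeq
    simpa [hQ₁, hQ₂, smul_smul, ENNReal.mul_inv_cancel hZne hZnetop] using this
  have hdens : (fun x => (d₁ x : ℝ≥0∞)) =ᵐ[P] (fun x => (d₂ x : ℝ≥0∞)) := by
    refine (withDensity_eq_iff (hd₁m.coe_nnreal_ennreal) (hd₂m.coe_nnreal_ennreal) ?_).mp hwd
    rw [hl₁]; exact hZnetop
  filter_upwards [hdens] with x hx
  rw [hd₁c, hd₂c] at hx
  have h0p : (0:ℝ) ≤ Gp x + 1 := by positivity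
  have h0m : (0:ℝ) ≤ Gm x + 1 := by
    have : (0:ℝ) ≤ Gm x := le_max_right _ _; linarith
  have hx' : Gp x + 1 = Gm x + 1 := by
    rwa [ENNReal.ofReal_eq_ofReal_iff h0p h0m] at hx
  have := hsplit x
  simp only [Pi.zero_apply]
  linarith

/-- If the kernel `k` is characteristic (the kernel mean embedding
`Q ↦ ∫ φ dQ` is injective on probability measures with integrable embedding), then `H_C`
is dense in `L²_C(P_X)`.  Density of the quotient `H_C = H/constants` in
`L²_C(P_X) = L²(P_X)/constants` (whose norm is `‖[f]‖² = Var[f(X)]`) is expressed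
equivalently: the set of (classes of) functions of the form `x ↦ ⟪h, φ x⟫ + c` with
`h ∈ H`, `c ∈ ℝ`, is dense in `L²(P_X)`. -/
theorem statement13 {𝒳 H : Type*} [MeasurableSpace 𝒳]
    [NormedAddCommGroup H] [InnerProductSpace ℝ H] [CompleteSpace H]
    [TopologicalSpace.SeparableSpace H]
    (P : Measure 𝒳) [IsProbabilityMeasure P]
    (φ : 𝒳 → H) (hφ : StronglyMeasurable φ)
    (hφ2 : MemLp φ 2 P)
    -- the kernel is characteristic
    (hchar : ∀ Q₁ Q₂ : Measure 𝒳, IsProbabilityMeasure Q₁ → IsProbabilityMeasure Q₂ →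
      Integrable φ Q₁ → Integrable φ Q₂ →
      (∫ x, φ x ∂Q₁) = (∫ x, φ x ∂Q₂) → Q₁ = Q₂) :
    Dense {F : Lp ℝ 2 P | ∃ (h : H) (c : ℝ), (F : 𝒳 → ℝ) =ᵐ[P] fun x => ⟪h, φ x⟫ + c} := by
  classical
  let S : Submodule ℝ (Lp ℝ 2 P) :=
  { carrier := {F : Lp ℝ 2 P | ∃ (h : H) (c : ℝ),
      (F : 𝒳 → ℝ) =ᵐ[P] fun x => ⟪h, φ x⟫ + c}
    add_mem' := by
      rintro F G ⟨h₁, c₁, hF⟩ ⟨h₂, c₂, hG⟩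
      refine ⟨h₁ + h₂, c₁ + c₂, (Lp.coeFn_add F G).trans ?_⟩
      filter_upwards [hF, hG] with x hx hy
      simp only [Pi.add_apply, hx, hy, inner_add_left]
      ring
    zero_mem' := ⟨0, 0, (Lp.coeFn_zero ℝ 2 P).trans
      (Filter.Eventually.of_forall fun x => by simp)⟩
    smul_mem' := by
      rintro c F ⟨h₁, c₁, hF⟩
      refine ⟨c • h₁, c * c₁, (Lp.coeFn_smul c F).trans ?_⟩
      filter_upwards [hF] with x hx
      simp only [Pi.smul_apply, hx, smul_eq_mul, real_inner_smul_left]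
      ring }
  suffices hd : Dense (S : Set (Lp ℝ 2 P)) from hd
  rw [Submodule.dense_iff_topologicalClosure_eq_top,
    Submodule.topologicalClosure_eq_top_iff, Submodule.eq_bot_iff]
  intro g hg
  set G : 𝒳 → ℝ := (g : 𝒳 → ℝ) with hGdef
  have hG2 : MemLp G 2 P := Lp.memLp g
  have hexp : (1:ℝ≥0∞)/1 = 1/2 + 1/2 := by
    simp [one_div, ENNReal.inv_two_add_inv_two]
  -- the inner product of `g` with every element of `S` vanishes
  have horth : ∀ (h : H) (c : ℝ), ∫ x, (⟪h, φ x⟫ + c) * G x ∂P = 0 := by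
    intro h c
    have hmem2 : MemLp (fun x => ⟪h, φ x⟫ + c) 2 P :=
      (hφ2.const_inner h).add (g := fun _ => c) (memLp_const c)
    have hmem : hmem2.toLp _ ∈ S := ⟨h, c, hmem2.coeFn_toLp⟩
    have h0 := (Submodule.mem_orthogonal S g).mp hg _ hmem
    rw [L2.inner_def] at h0
    rw [← h0]
    refine integral_congr_ae ?_
    filter_upwards [hmem2.coeFn_toLp] with x hx
    simp [hx, RCLike.inner_apply, mul_comm, hGdef]
  -- `∫ G = 0`
  have hGint : ∫ x, G x ∂P = 0 := by
    have := horth 0 1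
    simpa using this
  -- `∫ G • φ = 0`
  have hGφi : Integrable (fun x => G x • φ x) P :=
    memLp_one_iff_integrable.mp (hφ2.smul (φ := G) hG2 (r := 1))
  have hGφ : ∫ x, G x • φ x ∂P = 0 := by
    refine integral_eq_zero_of_forall_integral_inner_eq_zero ℝ _ hGφi fun c => ?_
    have := horth c 0
    rw [← this]
    refine integral_congr_ae (Filter.Eventually.of_forall fun x => ?_)
    simp [real_inner_smul_right, mul_comm]
  -- conclude
  have haeq : G =ᵐ[P] 0 := aux_zero P φ hφ2 hchar G hG2 hGint hGφ
  exact (Lp.eq_zero_iff_ae_eq_zero).mpr haeq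
end

section
/- Let C_X be a self-adjoint non-negative trace-class operator on a separable Hilbert space H with eigenbasis (h_n), let P^(n) be the orthogonal projection onto G ⊕ span{h_1,…,h_n} in F = G ⊕ H, and let C be a positive trace-class operator on F with blocks [[C_Y, C_{YX}],[C_{XY}, C_X]]. Then for C^(n) = P^(n) C P^(n) with blocks C_{XY}^(n), C_X^(n), one has ran C_{XY}^(n) ⊆ ran C_X^(n); in particular C_X^(n)† C_{XY}^(n) g ∈ H is well defined for every g ∈ G. -/
noncomputable section
open scoped RealInnerProductSpace

variable (G H : Type*)
  [NormedAddCommGroup G] [InnerProductSpace ℝ G] [CompleteSpace G]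
  [NormedAddCommGroup H] [InnerProductSpace ℝ H] [CompleteSpace H]

/-- Degenerate Cauchy–Schwarz for positive operators. -/
lemma cs_zero {F : Type*} [NormedAddCommGroup F] [InnerProductSpace ℝ F] [CompleteSpace F]
    (C : F →L[ℝ] F) (hsa : IsSelfAdjoint C) (hpos : ∀ x : F, 0 ≤ ⟪x, C x⟫)
    (u v : F) (hu : ⟪u, C u⟫ = 0) : ⟪u, C v⟫ = 0 := by
  set a : ℝ := ⟪u, C v⟫ with ha
  set d : ℝ := ⟪v, C v⟫ with hd
  have hsym : ⟪v, C u⟫ = a := by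
    calc ⟪v, C u⟫ = ⟪C u, v⟫ := real_inner_comm _ _
    _ = ⟪u, C v⟫ := hsa.isSymmetric u v
  have hd0 : 0 ≤ d := hpos v
  have key : ∀ t : ℝ, 0 ≤ 2 * t * a + t ^ 2 * d := by
    intro t
    have h := hpos (u + t • v)
    simp only [map_add, map_smul, inner_add_left, inner_add_right,
      real_inner_smul_left, real_inner_smul_right] at h
    rw [hu] at h
    rw [hsym] at h
    nlinarith [h]
  have h1 := key (-(a / (d + 1)))
  have hden : (0:ℝ) < d + 1 := by linarith
  have h2 : 2 * (-(a / (d + 1))) * a + (-(a / (d + 1))) ^ 2 * d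
      = -(a ^ 2 * (d + 2)) / (d + 1) ^ 2 := by
    field_simp
    ring
  rw [h2] at h1
  have h3 : 0 ≤ -(a ^ 2 * (d + 2)) := by
    have := (div_nonneg_iff).mp h1
    rcases this with ⟨h, _⟩ | ⟨_, h⟩
    · exact h
    · nlinarith
  have ha2 : a ^ 2 = 0 := le_antisymm (by nlinarith) (sq_nonneg a)
  exact (pow_eq_zero_iff two_ne_zero).mp ha2

lemma inH_adjoint (h : H) (z : DirSum G H) : ⟪inH G H h, z⟫ = ⟪h, prH G H z⟫ := by
  simp [inH, prH, WithLp.prod_inner_apply]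

/-- Let `C` be a positive trace-class operator on `F = G ⊕ H` with blocks
`[[C_Y, C_YX],[C_XY, C_X]]` (here `C_X = pr_H ∘ C ∘ in_H`, `C_XY = pr_H ∘ C ∘ in_G`), and let
`(b n)` be an orthonormal eigenbasis of the self-adjoint non-negative trace-class block
`C_X`.  Let `P n` be the orthogonal projection of `H` onto `span{b 0, …, b (n-1)}`, so that
`P^(n) = Id_G ⊕ P n` and the blocks of `C^(n) = P^(n) C P^(n)` are
`C_XY^(n) = (P n) ∘ C_XY` and `C_X^(n) = (P n) ∘ C_X ∘ (P n)`.  Then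
`ran C_XY^(n) ⊆ ran C_X^(n)`; in particular `C_X^(n)† C_XY^(n) g ∈ H` is well defined for
every `g ∈ G`. -/
theorem statement17
    [TopologicalSpace.SeparableSpace G] [TopologicalSpace.SeparableSpace H]
    (C : DirSum G H →L[ℝ] DirSum G H)
    (hsa : IsSelfAdjoint C) (hpos : ∀ x : DirSum G H, 0 ≤ ⟪x, C x⟫)
    -- trace-class: summable diagonal trace in some Hilbert basis of `F`
    (bE : HilbertBasis ℕ ℝ (DirSum G H)) (htr : Summable fun i => ⟪bE i, C (bE i)⟫)
    -- `(b n)` is an orthonormal eigenbasis of the block `C_X`, with eigenvalues `σ`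
    (b : HilbertBasis ℕ ℝ H) (σ : ℕ → ℝ) (hσ : ∀ i, 0 ≤ σ i) (hσsum : Summable σ)
    (heig : ∀ i, ((prH G H).comp (C.comp (inH G H))) (b i) = σ i • b i)
    -- `P n` is the orthogonal projection onto `span {b 0, …, b (n-1)}`
    (P : ℕ → H →L[ℝ] H)
    (hP : ∀ (n : ℕ) (x : H), P n x = ∑ i ∈ Finset.range n, ⟪b i, x⟫ • b i) :
    ∀ n : ℕ,
      Set.range ((P n).comp ((prH G H).comp (C.comp (inG G H))))
        ⊆ Set.range ((P n).comp (((prH G H).comp (C.comp (inH G H))).comp (P n))) := by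
  intro n
  rintro _ ⟨g, rfl⟩
  set T := (prH G H).comp (C.comp (inH G H)) with hT
  have hob := b.orthonormal
  -- inner products with finite sums in the orthonormal family
  have hinner : ∀ (a : ℕ → ℝ) (i : ℕ), i ∈ Finset.range n →
      ⟪b i, ∑ j ∈ Finset.range n, a j • b j⟫ = a i := by
    intro a i hi
    rw [inner_sum]
    simp only [real_inner_smul_right]
    rw [Finset.sum_eq_single i]
    · have : ⟪b i, b i⟫ = 1 := by
        rw [real_inner_self_eq_norm_mul_norm, hob.1 i]; norm_num
      rw [this]; ring
    · intro j _ hne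
      rw [hob.2 (Ne.symm hne)]; ring
    · intro h; exact absurd hi h
  set c : ℕ → ℝ := fun i => ⟪b i, prH G H (C (inG G H g))⟫ with hc
  set a : ℕ → ℝ := fun i => if σ i = 0 then 0 else c i / σ i with haa
  set x : H := ∑ i ∈ Finset.range n, a i • b i with hx
  refine ⟨x, ?_⟩
  simp only [ContinuousLinearMap.comp_apply]
  have hPx : P n x = x := by
    rw [hP, hx]
    exact Finset.sum_congr rfl fun i hi => by rw [hinner a i hi]
  rw [hPx]
  have hTx : T x = ∑ i ∈ Finset.range n, (a i * σ i) • b i := by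
    rw [hx, map_sum]
    refine Finset.sum_congr rfl fun i _ => ?_
    rw [map_smul, heig i, smul_smul, mul_comm]
  rw [hTx, hP, hP]
  refine Finset.sum_congr rfl fun i hi => ?_
  rw [hinner _ i hi]
  -- remains: (a i * σ i) • b i = c i • b i
  congr 1
  by_cases hz : σ i = 0
  · -- coefficient c i vanishes by Cauchy–Schwarz
    have hci : c i = 0 := by
      have h1 : ⟪inH G H (b i), C (inH G H (b i))⟫ = 0 := by
        rw [inH_adjoint]
        have : prH G H (C (inH G H (b i))) = T (b i) := rfl
        rw [this, heig i, hz, zero_smul, inner_zero_right]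
      have h2 := cs_zero C hsa hpos (inH G H (b i)) (inG G H g) h1
      rw [inH_adjoint] at h2
      exact h2
    simp only [haa, if_pos hz, zero_mul]
    exact hci.symm
  · simp only [haa, if_neg hz]
    field_simp
    rfl
end
end

section
/- In the setting of the centred finite-rank CME approximation, for every g ∈ G and n ∈ ℕ, the equivalence class [h_g^(n)] of h_g^(n) := C_X^(n)† C_{XY}^(n) g is the orthogonal projection, in the quotient space L²_C(P_X) with inner product ⟨[f₁],[f₂]⟩ = Cov[f₁(X), f₂(X)], of [f_g] onto the finite-dimensional subspace H_C^(n) spanned by [h_1],…,[h_n]. -/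
open MeasureTheory
open scoped RealInnerProductSpace

/-- In the centred finite-rank CME approximation, for every `g ∈ G` and
`n ∈ ℕ`, the class `[h_g^(n)]` of `h_g^(n) := C_X^(n)† C_XY^(n) g` is the orthogonal
projection, in `L²_C(P_X)` with inner product `⟨[f₁],[f₂]⟩ = Cov[f₁(X), f₂(X)]`, of `[f_g]`
onto the subspace `H_C^(n)` spanned by `[b 0], …, [b (n-1)]`.  Concretely:
`h_g^(n) ∈ span{b 0, …, b (n-1)}`, and for every `h` in this span,
`Cov[f_g(X) − h_g^(n)(X), h(X)] = 0`.  Here `h_g^(n) = Qn n g` where `Qn n` is the operator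
`C_X^(n)† C_XY^(n)` given by its Douglas characterisation, with
`C_X^(n) = (P n) C_X (P n)` and `C_XY^(n) = (P n) C_XY` for `P n` the orthogonal projection
onto `span{b 0, …, b (n-1)}`, `(b i)` an orthonormal eigenbasis of `C_X`. -/
theorem statement18 {Ω 𝒳 𝒴 H G : Type*}
    [MeasurableSpace Ω] [MeasurableSpace 𝒳] [MeasurableSpace 𝒴]
    [NormedAddCommGroup H] [InnerProductSpace ℝ H] [CompleteSpace H]
    [TopologicalSpace.SeparableSpace H]
    [NormedAddCommGroup G] [InnerProductSpace ℝ G] [CompleteSpace G]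
    [TopologicalSpace.SeparableSpace G]
    (ℙ : Measure Ω) [IsProbabilityMeasure ℙ]
    (X : Ω → 𝒳) (hX : Measurable X) (Y : Ω → 𝒴) (hY : Measurable Y)
    (φ : 𝒳 → H) (hφ : StronglyMeasurable φ) (ψ : 𝒴 → G) (hψ : StronglyMeasurable ψ)
    (hφ2 : MemLp (fun ω => φ (X ω)) 2 ℙ) (hψ2 : MemLp (fun ω => ψ (Y ω)) 2 ℙ)
    (CX : H →L[ℝ] H) (CXY : G →L[ℝ] H)
    (hCX : ∀ h h' : H, ⟪h, CX h'⟫ =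
      (∫ ω, ⟪h, φ (X ω)⟫ * ⟪h', φ (X ω)⟫ ∂ℙ)
        - (∫ ω, ⟪h, φ (X ω)⟫ ∂ℙ) * (∫ ω, ⟪h', φ (X ω)⟫ ∂ℙ))
    (hCXY : ∀ (h : H) (g : G), ⟪h, CXY g⟫ =
      (∫ ω, ⟪h, φ (X ω)⟫ * ⟪g, ψ (Y ω)⟫ ∂ℙ)
        - (∫ ω, ⟪h, φ (X ω)⟫ ∂ℙ) * (∫ ω, ⟪g, ψ (Y ω)⟫ ∂ℙ))
    -- `f_g` is a version of the conditional expectation `E[g(Y) | X = ·]`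
    (fg : G → 𝒳 → ℝ)
    (hfg : ∀ g : G, (fun ω => fg g (X ω)) =ᵐ[ℙ]
      ℙ[(fun ω => ⟪g, ψ (Y ω)⟫) | MeasurableSpace.comap X ‹MeasurableSpace 𝒳›])
    -- `(b i)` is an orthonormal eigenbasis of `C_X`
    (b : HilbertBasis ℕ ℝ H) (σ : ℕ → ℝ) (hσ : ∀ i, 0 ≤ σ i)
    (heig : ∀ i, CX (b i) = σ i • b i)
    -- `P n` is the orthogonal projection onto `span {b 0, …, b (n-1)}`
    (P : ℕ → H →L[ℝ] H)
    (hP : ∀ (n : ℕ) (x : H), P n x = ∑ i ∈ Finset.range n, ⟪b i, x⟫ • b i)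
    -- `Qn n` is the operator `C_X^(n)† C_XY^(n)`, via its Douglas characterisation
    (Qn : ℕ → G →L[ℝ] H)
    (hQn1 : ∀ n, (((P n).comp (CX.comp (P n))).comp (Qn n)) = (P n).comp CXY)
    (hQn2 : ∀ n, LinearMap.ker (Qn n : G →ₗ[ℝ] H) = LinearMap.ker ((P n).comp CXY : G →ₗ[ℝ] H))
    (hQn3 : ∀ n, Set.range (Qn n) ⊆ closure (Set.range ((P n).comp (CX.comp (P n))))) :
    ∀ (n : ℕ) (g : G),
      (Qn n g ∈ Submodule.span ℝ ((fun i => b i) '' {i : ℕ | i < n})) ∧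
      ∀ h ∈ Submodule.span ℝ ((fun i => b i) '' {i : ℕ | i < n}),
        (∫ ω, (fg g (X ω) - ⟪Qn n g, φ (X ω)⟫) * ⟪h, φ (X ω)⟫ ∂ℙ)
          - (∫ ω, fg g (X ω) - ⟪Qn n g, φ (X ω)⟫ ∂ℙ) * (∫ ω, ⟪h, φ (X ω)⟫ ∂ℙ) = 0 := by
  -- product of two L² functions is integrable
  have hmul : ∀ {u v : Ω → ℝ}, MemLp u 2 ℙ → MemLp v 2 ℙ →
      Integrable (fun ω => u ω * v ω) ℙ := by
    intro u v hu hv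
    rw [← memLp_one_iff_integrable]
    exact hv.smul (r := 1) hu
  intro n g
  set S : Submodule ℝ H := Submodule.span ℝ ((fun i => b i) '' {i : ℕ | i < n}) with hS
  -- basic facts about P n
  have hPA : ∀ x : H, P n x ∈ S := by
    intro x
    rw [hP]
    exact Submodule.sum_mem _ fun i hi => Submodule.smul_mem _ _
      (Submodule.subset_span ⟨i, Finset.mem_range.mp hi, rfl⟩)
  have hPid : ∀ x ∈ S, P n x = x := by
    intro x hx
    induction hx using Submodule.span_induction with
    | mem x hx =>
      obtain ⟨j, hj, rfl⟩ := hx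
      rw [hP]
      have ho : ∀ i j : ℕ, ⟪b i, (b j : H)⟫ = if i = j then (1:ℝ) else 0 :=
        fun i j => orthonormal_iff_ite.mp b.orthonormal i j
      simp [ho, ite_smul, Finset.mem_range.mpr hj]
    | zero => simp
    | add x y _ _ hx hy => rw [map_add, hx, hy]
    | smul c x _ hx => rw [ContinuousLinearMap.map_smul, hx]
  have hPsa : ∀ x y : H, ⟪P n x, y⟫ = ⟪x, P n y⟫ := by
    intro x y
    rw [hP, hP, sum_inner, inner_sum]
    refine Finset.sum_congr rfl fun i _ => ?_
    rw [real_inner_smul_left, real_inner_smul_right, real_inner_comm x]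
    ring
  -- Part 1 : Qn n g ∈ S
  haveI : FiniteDimensional ℝ S := by
    refine FiniteDimensional.span_of_finite ℝ ?_
    exact (Set.finite_Iio n).image _
  have hSclosed : IsClosed (S : Set H) := S.closed_of_finiteDimensional
  have h1 : Qn n g ∈ S := by
    have hr : Set.range ((P n).comp (CX.comp (P n))) ⊆ (S : Set H) := by
      rintro _ ⟨x, rfl⟩
      exact hPA _
    exact closure_minimal hr hSclosed (hQn3 n ⟨g, rfl⟩)
  refine ⟨h1, fun h hh => ?_⟩
  -- key identity : ⟪h, CX (Qn n g)⟫ = ⟪h, CXY g⟫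
  have hE : P n (CX (Qn n g)) = P n (CXY g) := by
    have := congrArg (fun T : G →L[ℝ] H => T g) (hQn1 n)
    simpa [ContinuousLinearMap.comp_apply, hPid _ h1] using this
  have key : ⟪h, CX (Qn n g)⟫ = ⟪h, CXY g⟫ := by
    calc ⟪h, CX (Qn n g)⟫ = ⟪P n h, CX (Qn n g)⟫ := by rw [hPid _ hh]
      _ = ⟪h, P n (CX (Qn n g))⟫ := hPsa _ _
      _ = ⟪h, P n (CXY g)⟫ := by rw [hE]
      _ = ⟪P n h, CXY g⟫ := (hPsa _ _).symm
      _ = ⟪h, CXY g⟫ := by rw [hPid _ hh]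
  -- analysis
  have hm := hX.comap_le
  set m : MeasurableSpace Ω := MeasurableSpace.comap X ‹MeasurableSpace 𝒳› with hm_def
  haveI : SigmaFinite (ℙ.trim hm) := inferInstance
  set F : Ω → ℝ := fun ω => ⟪g, ψ (Y ω)⟫ with hF_def
  set A : Ω → ℝ := fun ω => ⟪h, φ (X ω)⟫ with hA_def
  set q : Ω → ℝ := fun ω => ⟪Qn n g, φ (X ω)⟫ with hq_def
  have hF2 : MemLp F 2 ℙ := hψ2.const_inner g
  have hA2 : MemLp A 2 ℙ := hφ2.const_inner h
  have hq2 : MemLp q 2 ℙ := hφ2.const_inner (Qn n g)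
  have hFi : Integrable F ℙ := hF2.integrable one_le_two
  have hAi : Integrable A ℙ := hA2.integrable one_le_two
  have hqi : Integrable q ℙ := hq2.integrable one_le_two
  have hAm : StronglyMeasurable[m] A := by
    have hu : StronglyMeasurable (fun x => ⟪h, φ x⟫ : 𝒳 → ℝ) :=
      stronglyMeasurable_const.inner hφ
    exact (hu.measurable.comp (Measurable.of_comap_le le_rfl)).stronglyMeasurable
  have hAF : Integrable (fun ω => A ω * F ω) ℙ := hmul hA2 hF2
  have hpull : ℙ[fun ω => A ω * F ω | m] =ᵐ[ℙ] fun ω => A ω * (ℙ[F|m]) ω := by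
    have := condExp_mul_of_stronglyMeasurable_left (μ := ℙ) hAm hAF hFi
    filter_upwards [this] with ω hω using hω
  have hfgX : (fun ω => fg g (X ω)) =ᵐ[ℙ] ℙ[F|m] := hfg g
  -- the function fg g ∘ X times A
  have hfgAae : (fun ω => fg g (X ω) * A ω) =ᵐ[ℙ] ℙ[fun ω => A ω * F ω | m] := by
    filter_upwards [hfgX, hpull] with ω h1ω h2ω
    rw [h1ω, h2ω, mul_comm]
  have hfgA_int : Integrable (fun ω => fg g (X ω) * A ω) ℙ :=
    (integrable_condExp (f := fun ω => A ω * F ω)).congr hfgAae.symm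
  have hfg_int : Integrable (fun ω => fg g (X ω)) ℙ :=
    integrable_condExp.congr hfgX.symm
  have E1 : ∫ ω, fg g (X ω) * A ω ∂ℙ = ∫ ω, A ω * F ω ∂ℙ := by
    rw [integral_congr_ae hfgAae]
    exact integral_condExp hm
  have E2 : ∫ ω, fg g (X ω) ∂ℙ = ∫ ω, F ω ∂ℙ := by
    rw [integral_congr_ae hfgX]
    exact integral_condExp hm
  have hqA : Integrable (fun ω => q ω * A ω) ℙ := hmul hq2 hA2
  have E3 : ∫ ω, (fg g (X ω) - q ω) * A ω ∂ℙ
      = (∫ ω, fg g (X ω) * A ω ∂ℙ) - ∫ ω, q ω * A ω ∂ℙ := by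
    rw [← integral_sub hfgA_int hqA]
    congr 1
    funext ω
    ring
  have E4 : ∫ ω, (fg g (X ω) - q ω) ∂ℙ
      = (∫ ω, fg g (X ω) ∂ℙ) - ∫ ω, q ω ∂ℙ := integral_sub hfg_int hqi
  have E5 : ∫ ω, q ω * A ω ∂ℙ = ∫ ω, A ω * q ω ∂ℙ := by
    congr 1
    funext ω
    ring
  have hXY : ⟪h, CXY g⟫ = (∫ ω, A ω * F ω ∂ℙ)
      - (∫ ω, A ω ∂ℙ) * (∫ ω, F ω ∂ℙ) := hCXY h g
  have hXX : ⟪h, CX (Qn n g)⟫ = (∫ ω, A ω * q ω ∂ℙ)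
      - (∫ ω, A ω ∂ℙ) * (∫ ω, q ω ∂ℙ) := hCX h (Qn n g)
  show (∫ ω, (fg g (X ω) - q ω) * A ω ∂ℙ)
      - (∫ ω, fg g (X ω) - q ω ∂ℙ) * (∫ ω, A ω ∂ℙ) = 0
  rw [E3, E4, E1, E2, E5]
  nlinarith [key, hXY, hXX]
end
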